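/- arXiv:2402.14564 — 6 statements merged into one kernel-verified Lean document; each statement's English description precedes it below -/
import Mathlib

section
/- Let I = ∏_{j=1}^n [a_j, b_j] with a_j < b_j for all j, let I̊ = ∏_{j=1}^n (a_j, b_j) be its interior, and let f : I → ℝ be continuous. Define F(x_1,…,x_n) = ∫_{a_n}^{x_n} ⋯ ∫_{a_1}^{x_1} f(u_1,…,u_n) du_1 ⋯ du_n. Then on I̊ the mixed partial derivative ∂_1 ∂_2 ⋯ ∂_n F (taken successively, first in the n-th variable, then the (n−1)-st, and so on down to the first) exists, is continuous on I̊, and satisfies the partial differential equation ∂_1 ⋯ ∂_n F(x_1,…,x_n) = f(x_1,…,x_n) for all (x_1,…,x_n) ∈ I̊. -/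
open MeasureTheory

/-- The iterated integral `∫_{a_n}^{x_n} ⋯ ∫_{a_1}^{x_1} f(u_1,…,u_n) du_1 ⋯ du_n`,
defined by recursion: the outermost integral is taken in the last variable. -/
noncomputable def iterInt : (n : ℕ) → ((Fin n → ℝ) → ℝ) → (Fin n → ℝ) → (Fin n → ℝ) → ℝ
  | 0, f, _, _ => f (fun i => i.elim0)
  | n + 1, f, a, x =>
      ∫ t in (a (Fin.last n))..(x (Fin.last n)),
        iterInt n (fun u => f (Fin.snoc u t)) (fun i => a i.castSucc) (fun i => x i.castSucc)

/-- The partial derivative of `F` in the `i`-th coordinate direction. -/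
noncomputable def pd {n : ℕ} (i : Fin n) (F : (Fin n → ℝ) → ℝ) : (Fin n → ℝ) → ℝ :=
  fun x => deriv (fun t : ℝ => F (Function.update x i t)) (x i)

/-- The partial derivative of `F` in the `i`-th coordinate direction exists at `x`. -/
def PdAt {n : ℕ} (i : Fin n) (F : (Fin n → ℝ) → ℝ) (x : Fin n → ℝ) : Prop :=
  DifferentiableAt ℝ (fun t : ℝ => F (Function.update x i t)) (x i)

/-- Iterated partial derivative in the coordinates listed in `l` (the head of the list
being the outermost, i.e. last taken, derivative). For `l = [0, 1, …, n-1]` this is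
`∂_1 ∂_2 ⋯ ∂_n F`, taken successively: first in the `n`-th variable, down to the first. -/
noncomputable def mixedD {n : ℕ} : List (Fin n) → ((Fin n → ℝ) → ℝ) → (Fin n → ℝ) → ℝ
  | [], F => F
  | i :: l, F => pd i (mixedD l F)

/-- All the successive partial derivatives in `mixedD l F` exist at every point of `s`. -/
def MixedDiffOn {n : ℕ} : List (Fin n) → ((Fin n → ℝ) → ℝ) → Set (Fin n → ℝ) → Prop
  | [], _, _ => True
  | i :: l, F, s => MixedDiffOn l F s ∧ ∀ x ∈ s, PdAt i (mixedD l F) x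

lemma continuous_snocFun {n : ℕ} :
    Continuous (fun q : (Fin n → ℝ) × ℝ => (Fin.snoc q.1 q.2 : Fin (n+1) → ℝ)) := by
  apply continuous_pi
  intro j
  induction j using Fin.lastCases with
  | last => simpa using continuous_snd
  | cast i =>
    have h : Continuous fun q : (Fin n → ℝ) × ℝ => q.1 i := (continuous_apply i).comp continuous_fst
    simpa using h

lemma iterInt_continuous :
    ∀ (n : ℕ) {P : Type} [TopologicalSpace P] (a : Fin n → ℝ)
      (g : P → (Fin n → ℝ) → ℝ),
      Continuous (fun q : P × (Fin n → ℝ) => g q.1 q.2) →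
      Continuous (fun q : P × (Fin n → ℝ) => iterInt n (g q.1) a q.2) := by
  intro n
  induction n with
  | zero =>
    intro P _ a g hg
    show Continuous fun q : P × (Fin 0 → ℝ) => g q.1 (fun i => i.elim0)
    exact hg.comp (continuous_fst.prodMk continuous_const)
  | succ n IH =>
    intro P _ a g hg
    have h1 : Continuous (fun q : (P × ℝ) × (Fin n → ℝ) =>
        g q.1.1 (Fin.snoc q.2 q.1.2)) := by
      have e : (fun q : (P × ℝ) × (Fin n → ℝ) => g q.1.1 (Fin.snoc q.2 q.1.2))
          = (fun q : P × (Fin (n+1) → ℝ) => g q.1 q.2) ∘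
            (fun q : (P × ℝ) × (Fin n → ℝ) => (q.1.1, Fin.snoc q.2 q.1.2)) := rfl
      rw [e]
      exact hg.comp ((continuous_fst.comp continuous_fst).prodMk
        (continuous_snocFun.comp (continuous_snd.prodMk (continuous_snd.comp continuous_fst))))
    have IH' := IH (fun i => a i.castSucc)
      (fun pt : P × ℝ => fun u => g pt.1 (Fin.snoc u pt.2)) h1
    have key := intervalIntegral.continuous_parametric_primitive_of_continuous
      (μ := volume) (a₀ := a (Fin.last n))
      (f := fun (q : P × (Fin (n+1) → ℝ)) (t : ℝ) =>
        iterInt n (fun u => g q.1 (Fin.snoc u t)) (fun i => a i.castSucc)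
          (fun i => q.2 i.castSucc))
      (by
        have e2 : (Function.uncurry fun (q : P × (Fin (n+1) → ℝ)) (t : ℝ) =>
              iterInt n (fun u => g q.1 (Fin.snoc u t)) (fun i => a i.castSucc)
                (fun i => q.2 i.castSucc))
            = (fun q : (P × ℝ) × (Fin n → ℝ) =>
                iterInt n ((fun pt : P × ℝ => fun u => g pt.1 (Fin.snoc u pt.2)) q.1)
                  (fun i => a i.castSucc) q.2) ∘
              (fun qt : (P × (Fin (n+1) → ℝ)) × ℝ =>
                ((qt.1.1, qt.2), fun i : Fin n => qt.1.2 i.castSucc)) := rfl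
        rw [e2]
        exact IH'.comp (((continuous_fst.comp continuous_fst).prodMk continuous_snd).prodMk
          (continuous_pi fun i => (continuous_apply i.castSucc).comp
            (continuous_snd.comp continuous_fst))))
    simp only [iterInt]
    have e3 : (fun q : P × (Fin (n+1) → ℝ) =>
          ∫ t in (a (Fin.last n))..(q.2 (Fin.last n)),
            iterInt n (fun u => g q.1 (Fin.snoc u t)) (fun i => a i.castSucc)
              (fun i => q.2 i.castSucc))
        = (fun p : (P × (Fin (n+1) → ℝ)) × ℝ =>
            ∫ t in (a (Fin.last n))..p.2,
              iterInt n (fun u => g p.1.1 (Fin.snoc u t)) (fun i => a i.castSucc)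
                (fun i => p.1.2 i.castSucc)) ∘
          (fun q : P × (Fin (n+1) → ℝ) => (q, q.2 (Fin.last n))) := rfl
    rw [e3]
    exact key.comp (continuous_id.prodMk ((continuous_apply (Fin.last n)).comp continuous_snd))

lemma pd_last_iterInt {n : ℕ} (f : (Fin (n+1) → ℝ) → ℝ) (hf : Continuous f)
    (a : Fin (n+1) → ℝ) (x : Fin (n+1) → ℝ) :
    PdAt (Fin.last n) (iterInt (n+1) f a) x ∧
    pd (Fin.last n) (iterInt (n+1) f a) x =
      iterInt n (fun u => f (Fin.snoc u (x (Fin.last n)))) (fun i => a i.castSucc)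
        (fun i => x i.castSucc) := by
  set G : ℝ → ℝ := fun t => iterInt n (fun u => f (Fin.snoc u t)) (fun i => a i.castSucc)
      (fun i => x i.castSucc) with hGdef
  have hGc : Continuous G := by
    have h1 : Continuous (fun q : ℝ × (Fin n → ℝ) => f (Fin.snoc q.2 q.1)) :=
      hf.comp (continuous_snocFun.comp (continuous_snd.prodMk continuous_fst))
    have h2 := iterInt_continuous n (fun i => a i.castSucc)
      (fun t : ℝ => fun u => f (Fin.snoc u t)) h1
    exact h2.comp (continuous_id.prodMk continuous_const)
  have key : (fun t : ℝ => iterInt (n+1) f a (Function.update x (Fin.last n) t))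
      = fun t => ∫ s in (a (Fin.last n))..t, G s := by
    funext t
    simp only [iterInt, hGdef]
    rw [Function.update_self]
    congr 1
    funext s
    congr 1
    funext i
    rw [Function.update_of_ne (Fin.castSucc_lt_last i).ne]
  have hd : HasDerivAt (fun t : ℝ => iterInt (n+1) f a (Function.update x (Fin.last n) t))
      (G (x (Fin.last n))) (x (Fin.last n)) := by
    rw [key]
    exact (hGc.integral_hasStrictDerivAt (a (Fin.last n)) (x (Fin.last n))).hasDerivAt
  exact ⟨hd.differentiableAt, hd.deriv⟩

lemma pdAt_castSucc_lift {n : ℕ} (G : ℝ → (Fin n → ℝ) → ℝ) (i : Fin n) (x : Fin (n+1) → ℝ)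
    (h : PdAt i (G (x (Fin.last n))) (fun j => x j.castSucc)) :
    PdAt i.castSucc (fun y : Fin (n+1) → ℝ => G (y (Fin.last n)) (fun j => y j.castSucc)) x := by
  unfold PdAt at h ⊢
  have e : ∀ t : ℝ, (fun j : Fin n => Function.update x i.castSucc t j.castSucc)
      = Function.update (fun j => x j.castSucc) i t :=
    fun t => Function.update_comp_eq_of_injective' x (Fin.castSucc_injective n) i t
  have e2 : ∀ t : ℝ, Function.update x i.castSucc t (Fin.last n) = x (Fin.last n) :=
    fun t => Function.update_of_ne (Fin.castSucc_lt_last i).ne' t x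
  simpa only [e, e2] using h

lemma pd_castSucc_lift {n : ℕ} (G : ℝ → (Fin n → ℝ) → ℝ) (i : Fin n) :
    pd i.castSucc (fun y : Fin (n+1) → ℝ => G (y (Fin.last n)) (fun j => y j.castSucc))
      = fun x => pd i (G (x (Fin.last n))) (fun j => x j.castSucc) := by
  funext x
  unfold pd
  have e : ∀ t : ℝ, (fun j : Fin n => Function.update x i.castSucc t j.castSucc)
      = Function.update (fun j => x j.castSucc) i t :=
    fun t => Function.update_comp_eq_of_injective' x (Fin.castSucc_injective n) i t
  have e2 : ∀ t : ℝ, Function.update x i.castSucc t (Fin.last n) = x (Fin.last n) :=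
    fun t => Function.update_of_ne (Fin.castSucc_lt_last i).ne' t x
  simp only [e, e2]

lemma mixedD_map_castSucc {n : ℕ} (l : List (Fin n)) (G : ℝ → (Fin n → ℝ) → ℝ) :
    mixedD (l.map Fin.castSucc)
        (fun y : Fin (n+1) → ℝ => G (y (Fin.last n)) (fun j => y j.castSucc))
      = fun x => mixedD l (G (x (Fin.last n))) (fun j => x j.castSucc) := by
  induction l generalizing G with
  | nil => rfl
  | cons i l IH =>
    show pd i.castSucc (mixedD (l.map Fin.castSucc) _) = _
    rw [IH]
    exact pd_castSucc_lift (fun t => mixedD l (G t)) i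

lemma mixedDiffOn_map_castSucc {n : ℕ} (l : List (Fin n)) (G : ℝ → (Fin n → ℝ) → ℝ)
    (h : ∀ t, MixedDiffOn l (G t) Set.univ) :
    MixedDiffOn (l.map Fin.castSucc)
      (fun y : Fin (n+1) → ℝ => G (y (Fin.last n)) (fun j => y j.castSucc)) Set.univ := by
  induction l generalizing G with
  | nil => trivial
  | cons i l IH =>
    refine ⟨IH G (fun t => (h t).1), fun x _ => ?_⟩
    show PdAt i.castSucc (mixedD (l.map Fin.castSucc) _) x
    rw [mixedD_map_castSucc]
    exact pdAt_castSucc_lift (fun t => mixedD l (G t)) i x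
      ((h (x (Fin.last n))).2 _ (Set.mem_univ _))

lemma mixedD_append {n : ℕ} (l₁ l₂ : List (Fin n)) (F : (Fin n → ℝ) → ℝ) :
    mixedD (l₁ ++ l₂) F = mixedD l₁ (mixedD l₂ F) := by
  induction l₁ with
  | nil => rfl
  | cons i l IH =>
    show pd i (mixedD (l ++ l₂) F) = _
    rw [IH]
    rfl

lemma mixedDiffOn_append {n : ℕ} (l₁ l₂ : List (Fin n)) (F : (Fin n → ℝ) → ℝ)
    (s : Set (Fin n → ℝ)) (h₂ : MixedDiffOn l₂ F s) (h₁ : MixedDiffOn l₁ (mixedD l₂ F) s) :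
    MixedDiffOn (l₁ ++ l₂) F s := by
  induction l₁ with
  | nil => exact h₂
  | cons i l IH =>
    refine ⟨IH h₁.1, fun x hx => ?_⟩
    show PdAt i (mixedD (l ++ l₂) F) x
    rw [mixedD_append]
    exact h₁.2 x hx

lemma iterInt_main :
    ∀ (n : ℕ) (f : (Fin n → ℝ) → ℝ), Continuous f → ∀ (a : Fin n → ℝ),
      MixedDiffOn (List.finRange n) (iterInt n f a) Set.univ ∧
      ∀ x, mixedD (List.finRange n) (iterInt n f a) x = f x := by
  intro n
  induction n with
  | zero =>
    intro f hf a
    refine ⟨trivial, fun x => ?_⟩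
    show iterInt 0 f a x = f x
    show f (fun i => i.elim0) = f x
    congr 1
    funext i
    exact i.elim0
  | succ n IH =>
    intro f hf a
    have hft : ∀ t : ℝ, Continuous (fun u : Fin n → ℝ => f (Fin.snoc u t)) := fun t =>
      hf.comp (continuous_snocFun.comp (continuous_id.prodMk continuous_const))
    set G : ℝ → (Fin n → ℝ) → ℝ :=
      fun t => iterInt n (fun u => f (Fin.snoc u t)) (fun i => a i.castSucc) with hGdef
    have step1 : mixedD [Fin.last n] (iterInt (n+1) f a)
        = fun y : Fin (n+1) → ℝ => G (y (Fin.last n)) (fun j => y j.castSucc) := by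
      funext x
      exact (pd_last_iterInt f hf a x).2
    have step1diff : MixedDiffOn [Fin.last n] (iterInt (n+1) f a) Set.univ :=
      ⟨trivial, fun x _ => (pd_last_iterInt f hf a x).1⟩
    have IHt := fun t : ℝ => IH (fun u => f (Fin.snoc u t)) (hft t) (fun i => a i.castSucc)
    rw [List.finRange_succ_last]
    constructor
    · apply mixedDiffOn_append _ _ _ _ step1diff
      rw [step1]
      exact mixedDiffOn_map_castSucc _ G (fun t => (IHt t).1)
    · intro x
      rw [mixedD_append, step1, mixedD_map_castSucc]
      simp only [hGdef]
      rw [(IHt (x (Fin.last n))).2 (fun j => x j.castSucc)]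
      exact congrArg f (Fin.snoc_init_self x)

lemma iterInt_congr :
    ∀ (n : ℕ) (f g : (Fin n → ℝ) → ℝ) (a b : Fin n → ℝ),
      (∀ u ∈ Set.Icc a b, f u = g u) →
      ∀ x ∈ Set.Icc a b, iterInt n f a x = iterInt n g a x := by
  intro n
  induction n with
  | zero =>
    intro f g a b h x hx
    show f (fun i => i.elim0) = g (fun i => i.elim0)
    exact h _ ⟨fun i => i.elim0, fun i => i.elim0⟩
  | succ n IH =>
    intro f g a b h x hx
    simp only [iterInt]
    apply intervalIntegral.integral_congr
    intro t ht
    have hxl : a (Fin.last n) ≤ x (Fin.last n) := hx.1 (Fin.last n)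
    rw [Set.uIcc_of_le hxl] at ht
    have htmem : t ∈ Set.Icc (a (Fin.last n)) (b (Fin.last n)) :=
      ⟨ht.1, le_trans ht.2 (hx.2 (Fin.last n))⟩
    apply IH (fun u => f (Fin.snoc u t)) (fun u => g (Fin.snoc u t))
      (fun i => a i.castSucc) (fun i => b i.castSucc)
    · intro u hu
      apply h
      constructor
      · intro j
        induction j using Fin.lastCases with
        | last => simpa using htmem.1
        | cast i => simpa using hu.1 i
      · intro j
        induction j using Fin.lastCases with
        | last => simpa using htmem.2
        | cast i => simpa using hu.2 i
    · exact ⟨fun i => hx.1 i.castSucc, fun i => hx.2 i.castSucc⟩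

lemma transfer_localize {n : ℕ} {U : Set (Fin n → ℝ)} (hU : IsOpen U)
    {F F' : (Fin n → ℝ) → ℝ} (h : ∀ x ∈ U, F x = F' x) :
    ∀ l : List (Fin n),
      (∀ x ∈ U, mixedD l F x = mixedD l F' x) ∧
      (MixedDiffOn l F' Set.univ → MixedDiffOn l F U) := by
  intro l
  induction l with
  | nil => exact ⟨h, fun _ => trivial⟩
  | cons i l IH =>
    have hupd : ∀ x : Fin n → ℝ, Continuous (fun t : ℝ => Function.update x i t) :=
      fun x => continuous_const.update i continuous_id
    have hev : ∀ x ∈ U, (fun t => mixedD l F (Function.update x i t))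
        =ᶠ[nhds (x i)] (fun t => mixedD l F' (Function.update x i t)) := by
      intro x hx
      have hmem : {t : ℝ | Function.update x i t ∈ U} ∈ nhds (x i) := by
        apply (hupd x).continuousAt.preimage_mem_nhds
        rw [Function.update_eq_self]
        exact hU.mem_nhds hx
      filter_upwards [hmem] with t ht
      exact (IH).1 _ ht
    constructor
    · intro x hx
      exact (hev x hx).deriv_eq
    · intro hd
      refine ⟨IH.2 hd.1, fun x hx => ?_⟩
      exact (hd.2 x (Set.mem_univ x)).congr_of_eventuallyEq (hev x hx)


/-- Let `I = ∏_{j=1}^n [a_j, b_j]` with `a_j < b_j` for all `j`, let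
`I̊ = ∏_{j=1}^n (a_j, b_j)` be its interior, and let `f : I → ℝ` be continuous. Define
`F(x) = ∫_{a_n}^{x_n} ⋯ ∫_{a_1}^{x_1} f(u) du_1 ⋯ du_n`. Then on `I̊` the mixed partial
derivative `∂_1 ∂_2 ⋯ ∂_n F` (taken successively, first in the `n`-th variable, then the
`(n−1)`-st, and so on down to the first) exists, is continuous on `I̊`, and satisfies
`∂_1 ⋯ ∂_n F = f` on `I̊`. -/
theorem iteratedIntegral_mixedPartial (n : ℕ) (a b : Fin n → ℝ) (hab : ∀ j, a j < b j)
    (f : (Fin n → ℝ) → ℝ) (hf : ContinuousOn f (Set.Icc a b)) :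
    MixedDiffOn (List.finRange n) (iterInt n f a)
        (Set.pi Set.univ fun j => Set.Ioo (a j) (b j)) ∧
      ContinuousOn (mixedD (List.finRange n) (iterInt n f a))
        (Set.pi Set.univ fun j => Set.Ioo (a j) (b j)) ∧
      ∀ x ∈ Set.pi Set.univ fun j => Set.Ioo (a j) (b j),
        mixedD (List.finRange n) (iterInt n f a) x = f x := by
  set U : Set (Fin n → ℝ) := Set.pi Set.univ fun j => Set.Ioo (a j) (b j) with hUdef
  have hUopen : IsOpen U := isOpen_set_pi Set.finite_univ (fun j _ => isOpen_Ioo)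
  have hUsub : U ⊆ Set.Icc a b := by
    intro x hx
    exact ⟨fun j => (hx j (Set.mem_univ j)).1.le, fun j => (hx j (Set.mem_univ j)).2.le⟩
  obtain ⟨g, hg⟩ := ContinuousMap.exists_restrict_eq (Y := ℝ)
    (isClosed_Icc (a := a) (b := b)) ⟨_, hf.restrict⟩
  have hfg : ∀ u ∈ Set.Icc a b, g u = f u := by
    intro u hu
    exact ContinuousMap.congr_fun hg ⟨u, hu⟩
  have hmain := iterInt_main n g g.continuous a
  have hFF' : ∀ x ∈ U, iterInt n f a x = iterInt n g a x :=
    fun x hx => iterInt_congr n f g a b (fun u hu => (hfg u hu).symm) x (hUsub hx)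
  have htr := transfer_localize hUopen hFF' (List.finRange n)
  refine ⟨htr.2 hmain.1, ?_, ?_⟩
  · have heq : ∀ x ∈ U, mixedD (List.finRange n) (iterInt n f a) x = f x := by
      intro x hx
      rw [htr.1 x hx, hmain.2 x, hfg x (hUsub hx)]
    exact (hf.mono hUsub).congr heq
  · intro x hx
    rw [htr.1 x hx, hmain.2 x, hfg x (hUsub hx)]
end

section
/- Let I = ∏_{j=1}^n [a_j, b_j] with a_j < b_j for all j, let f : I → ℝ be continuous, and let F : I → ℝ be continuous such that the mixed partial derivative ∂_1 ⋯ ∂_n F exists on the interior I̊ = ∏_{j=1}^n (a_j,b_j) and satisfies ∂_1 ⋯ ∂_n F = f on I̊. Then ∫_I f(x_1,…,x_n) dx_1⋯dx_n = ∑_{s ∈ {0,1}^n} (−1)^{#_0(s)} F(P_s), where for each binary string s ∈ {0,1}^n the vertex P_s ∈ ℝ^n has j-th coordinate b_j if s_j = 1 and a_j if s_j = 0, and #_0(s) denotes the number of zeros in s. -/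
open MeasureTheory

theorem mixedDiffOn_mono {n : ℕ} {l : List (Fin n)} {F : (Fin n → ℝ) → ℝ}
    {s t : Set (Fin n → ℝ)} (h : MixedDiffOn l F s) (hts : t ⊆ s) : MixedDiffOn l F t := by
  induction l with
  | nil => trivial
  | cons i l ih => exact ⟨ih h.1, fun x hx => h.2 x (hts hx)⟩

theorem sum_split {n : ℕ} (G : (Fin (n+1) → Bool) → ℝ) :
    ∑ s : Fin (n+1) → Bool, G s
      = ∑ s' : Fin n → Bool, (G (Fin.cons true s') + G (Fin.cons false s')) := by
  rw [← (Fin.consEquiv fun _ => Bool).sum_comp G]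
  rw [Fintype.sum_prod_type_right]
  refine Finset.sum_congr rfl fun s' _ => ?_
  rw [Fintype.sum_bool]
  rfl

theorem card_filter_cons {n : ℕ} (c : Bool) (s' : Fin n → Bool) :
    (Finset.univ.filter fun j : Fin (n+1) => (Fin.cons c s' : Fin (n+1) → Bool) j = false).card
      = (if c then 0 else 1) + (Finset.univ.filter fun j : Fin n => s' j = false).card := by
  rw [Finset.card_filter, Finset.card_filter, Fin.sum_univ_succ]
  simp only [Fin.cons_zero, Fin.cons_succ]
  cases c <;> simp

theorem vertex_cons {n : ℕ} (a b : Fin (n+1) → ℝ) (c : Bool) (s' : Fin n → Bool) :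
    (fun j : Fin (n+1) => if (Fin.cons c s' : Fin (n+1) → Bool) j then b j else a j)
      = Fin.cons (if c then b 0 else a 0)
          (fun j => if s' j then Fin.tail b j else Fin.tail a j) := by
  funext j
  refine Fin.cases ?_ ?_ j
  · simp
  · intro i; simp [Fin.tail]

-- slice lemma: pure equality
theorem mixedD_slice {n : ℕ} (l : List (Fin n)) (F : (Fin (n+1) → ℝ) → ℝ) (c : ℝ) :
    ∀ x : Fin n → ℝ, mixedD l (fun y => F (Fin.cons c y)) x
      = mixedD (l.map Fin.succ) F (Fin.cons c x) := by
  induction l with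
  | nil => intro x; rfl
  | cons i l ih =>
    intro x
    show deriv (fun t => mixedD l (fun y => F (Fin.cons c y)) (Function.update x i t)) (x i)
      = deriv (fun t => mixedD (l.map Fin.succ) F (Function.update (Fin.cons c x) i.succ t))
          ((Fin.cons c x : Fin (n+1) → ℝ) i.succ)
    have h1 : ∀ t, mixedD l (fun y => F (Fin.cons c y)) (Function.update x i t)
        = mixedD (l.map Fin.succ) F (Function.update (Fin.cons c x) i.succ t) := by
      intro t
      rw [ih, Fin.cons_update]
    simp only [h1, Fin.cons_succ]

theorem pdAt_slice {n : ℕ} (l : List (Fin n)) (F : (Fin (n+1) → ℝ) → ℝ) (c : ℝ)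
    (i : Fin n) (x : Fin n → ℝ) (h : PdAt i.succ (mixedD (l.map Fin.succ) F) (Fin.cons c x)) :
    PdAt i (mixedD l (fun y => F (Fin.cons c y))) x := by
  unfold PdAt at *
  have h1 : (fun t => mixedD l (fun y => F (Fin.cons c y)) (Function.update x i t))
      = fun t => mixedD (l.map Fin.succ) F (Function.update (Fin.cons c x) i.succ t) := by
    funext t; rw [mixedD_slice, Fin.cons_update]
  rw [h1]
  simpa [Fin.cons_succ] using h

theorem mixedDiffOn_slice {n : ℕ} (l : List (Fin n)) (F : (Fin (n+1) → ℝ) → ℝ) (c : ℝ)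
    (U : Set (Fin (n+1) → ℝ)) (h : MixedDiffOn (l.map Fin.succ) F U) :
    MixedDiffOn l (fun y => F (Fin.cons c y)) {x | Fin.cons c x ∈ U} := by
  induction l with
  | nil => trivial
  | cons i l ih =>
    obtain ⟨h1, h2⟩ := h
    exact ⟨ih h1, fun x hx => pdAt_slice l F c i x (h2 _ hx)⟩

-- eventual equality along a coordinate line
theorem line_eventuallyEq {n : ℕ} {U : Set (Fin n → ℝ)} (hU : IsOpen U) {x : Fin n → ℝ}
    (hx : x ∈ U) (i : Fin n) {G₁ G₂ : (Fin n → ℝ) → ℝ} (h : Set.EqOn G₁ G₂ U) :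
    (fun t => G₁ (Function.update x i t)) =ᶠ[nhds (x i)] fun t => G₂ (Function.update x i t) := by
  have hc : Continuous fun t : ℝ => Function.update x i t := continuous_const.update i continuous_id
  have hmem : ∀ᶠ t in nhds (x i), Function.update x i t ∈ U := by
    have hx' : Function.update x i (x i) ∈ U := by
      rwa [Function.update_eq_self]
    exact (hc.continuousAt (x := x i)).eventually_mem (hU.mem_nhds hx')
  exact hmem.mono fun t ht => h ht

theorem pd_congr {n : ℕ} {U : Set (Fin n → ℝ)} (hU : IsOpen U) {x : Fin n → ℝ}
    (hx : x ∈ U) (i : Fin n) {G₁ G₂ : (Fin n → ℝ) → ℝ} (h : Set.EqOn G₁ G₂ U) :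
    pd i G₁ x = pd i G₂ x :=
  Filter.EventuallyEq.deriv_eq (line_eventuallyEq hU hx i h)

theorem pdAt_congr {n : ℕ} {U : Set (Fin n → ℝ)} (hU : IsOpen U) {x : Fin n → ℝ}
    (hx : x ∈ U) (i : Fin n) {G₁ G₂ : (Fin n → ℝ) → ℝ} (h : Set.EqOn G₁ G₂ U)
    (hd : PdAt i G₂ x) : PdAt i G₁ x :=
  (line_eventuallyEq hU hx i h).symm.differentiableAt_iff.mp hd

theorem mixedD_sub {n : ℕ} (l : List (Fin n)) {U : Set (Fin n → ℝ)} (hU : IsOpen U)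
    {A B : (Fin n → ℝ) → ℝ} (hA : MixedDiffOn l A U) (hB : MixedDiffOn l B U) :
    (∀ x ∈ U, mixedD l (fun y => A y - B y) x = mixedD l A x - mixedD l B x) ∧
      MixedDiffOn l (fun y => A y - B y) U := by
  induction l with
  | nil => exact ⟨fun x _ => rfl, trivial⟩
  | cons i l ih =>
    obtain ⟨hA1, hA2⟩ := hA
    obtain ⟨hB1, hB2⟩ := hB
    obtain ⟨iheq, ihdiff⟩ := ih hA1 hB1
    have key : ∀ x ∈ U, pd i (mixedD l fun y => A y - B y) x
        = mixedD (i :: l) A x - mixedD (i :: l) B x := by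
      intro x hx
      have e1 : pd i (mixedD l fun y => A y - B y) x
          = pd i (fun y => mixedD l A y - mixedD l B y) x :=
        pd_congr hU hx i (fun y hy => iheq y hy)
      rw [e1]
      show deriv (fun t => mixedD l A (Function.update x i t)
          - mixedD l B (Function.update x i t)) (x i) = _
      rw [deriv_fun_sub (hA2 x hx) (hB2 x hx)]
      rfl
    refine ⟨key, ihdiff, fun x hx => ?_⟩
    have : PdAt i (fun y => mixedD l A y - mixedD l B y) x :=
      DifferentiableAt.sub (hA2 x hx) (hB2 x hx)
    exact pdAt_congr hU hx i (fun y hy => iheq y hy) this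


theorem cons_mem_Icc {n : ℕ} {a b : Fin (n+1) → ℝ} {t : ℝ} {x' : Fin n → ℝ} :
    Fin.cons t x' ∈ Set.Icc a b ↔
      t ∈ Set.Icc (a 0) (b 0) ∧ x' ∈ Set.Icc (Fin.tail a) (Fin.tail b) := by
  simp only [Set.mem_Icc, Pi.le_def, Fin.forall_fin_succ, Fin.cons_zero, Fin.cons_succ, Fin.tail]
  tauto

theorem continuous_cons {n : ℕ} :
    Continuous fun z : ℝ × (Fin n → ℝ) => (Fin.cons z.1 z.2 : Fin (n+1) → ℝ) := by
  apply continuous_pi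
  intro i
  refine Fin.cases ?_ ?_ i
  · simpa using continuous_fst
  · intro j; exact (continuous_apply j).comp continuous_snd

theorem fubini_box {n : ℕ} (a b : Fin (n+1) → ℝ) (f : (Fin (n+1) → ℝ) → ℝ)
    (hf : ContinuousOn f (Set.Icc a b)) :
    ∫ x in Set.Icc a b, f x =
      ∫ x' in Set.Icc (Fin.tail a) (Fin.tail b), ∫ t in Set.Icc (a 0) (b 0),
        f (Fin.cons t x') := by
  have hmp := volume_preserving_piFinSuccAbove (fun _ : Fin (n+1) => ℝ) 0
  set e := MeasurableEquiv.piFinSuccAbove (fun _ : Fin (n+1) => ℝ) 0 with he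
  have hpre : e ⁻¹' ((Set.Icc (a 0) (b 0)) ×ˢ (Set.Icc (Fin.tail a) (Fin.tail b)))
      = Set.Icc a b := by
    ext x
    have : e x = (x 0, fun j => x (Fin.succAbove 0 j)) := rfl
    simp only [Set.mem_preimage, this, Set.mem_prod, Fin.succAbove_zero, Set.mem_Icc,
      Pi.le_def, Fin.forall_fin_succ, Fin.tail]
    tauto
  have key := hmp.setIntegral_preimage_emb e.measurableEmbedding
    (fun z : ℝ × (Fin n → ℝ) => f (Fin.cons z.1 z.2))
    ((Set.Icc (a 0) (b 0)) ×ˢ (Set.Icc (Fin.tail a) (Fin.tail b)))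
  rw [hpre] at key
  have hx : ∀ x : Fin (n+1) → ℝ, f (Fin.cons (x 0) (fun j => x (Fin.succAbove 0 j))) = f x := by
    intro x
    congr 1
    simp only [Fin.succAbove_zero]
    exact Fin.cons_self_tail x
  have key2 : ∫ x in Set.Icc a b, f x
      = ∫ z in (Set.Icc (a 0) (b 0)) ×ˢ (Set.Icc (Fin.tail a) (Fin.tail b)),
          f (Fin.cons z.1 z.2) := by
    rw [← key]
    refine setIntegral_congr_fun measurableSet_Icc fun x _ => ?_
    exact (hx x).symm
  rw [key2]
  -- now swap by Fubini
  have hcont : ContinuousOn (fun z : ℝ × (Fin n → ℝ) => f (Fin.cons z.1 z.2))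
      ((Set.Icc (a 0) (b 0)) ×ˢ (Set.Icc (Fin.tail a) (Fin.tail b))) := by
    refine hf.comp continuous_cons.continuousOn ?_
    intro z hz
    exact cons_mem_Icc.mpr ⟨hz.1, hz.2⟩
  have hint : IntegrableOn (fun z : ℝ × (Fin n → ℝ) => f (Fin.cons z.1 z.2))
      ((Set.Icc (a 0) (b 0)) ×ˢ (Set.Icc (Fin.tail a) (Fin.tail b))) := by
    exact hcont.integrableOn_compact (isCompact_Icc.prod isCompact_Icc)
  unfold IntegrableOn at hint
  rw [Measure.volume_eq_prod, ← Measure.prod_restrict] at hint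
  rw [Measure.volume_eq_prod, ← Measure.prod_restrict]
  exact integral_prod_symm _ hint

theorem aux_ftc : ∀ (n : ℕ) (a b : Fin n → ℝ), (∀ j, a j ≤ b j) →
    ∀ (f F : (Fin n → ℝ) → ℝ) (U : Set (Fin n → ℝ)), IsOpen U → Set.Icc a b ⊆ U →
    ContinuousOn f (Set.Icc a b) → ContinuousOn F (Set.Icc a b) →
    MixedDiffOn (List.finRange n) F U →
    (∀ x ∈ U, mixedD (List.finRange n) F x = f x) →
    ∫ x in Set.Icc a b, f x =
      ∑ s : Fin n → Bool,
        (-1 : ℝ) ^ (Finset.univ.filter fun j => s j = false).card *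
          F (fun j => if s j then b j else a j) := by
  intro n
  induction n with
  | zero =>
    intro a b hab f F U hU hsub hf hF hdiff hpde
    have hIcc : (Set.Icc a b : Set (Fin 0 → ℝ)) = Set.univ := by
      ext x
      simp [Set.mem_Icc, Pi.le_def]
    set x₀ : Fin 0 → ℝ := fun i => i.elim0 with hx₀
    have hx0U : x₀ ∈ U := hsub (by rw [hIcc]; trivial)
    have hfF : F x₀ = f x₀ := by
      have := hpde x₀ hx0U
      rwa [List.finRange_zero] at this
    have hvol : (volume : Measure (Fin 0 → ℝ)) Set.univ = 1 := by
      rw [volume_pi, Measure.pi_univ]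
      simp
    have hfc : f = fun _ => f x₀ := funext fun x => by rw [Subsingleton.elim x x₀]
    rw [hIcc, Measure.restrict_univ, hfc, integral_const, measureReal_def, hvol]
    rw [Fintype.sum_unique]
    have : (default : Fin 0 → Bool) = fun i => i.elim0 := Subsingleton.elim _ _
    simp [← hfF]
    exact congrArg F (Subsingleton.elim _ _)
  | succ n ih =>
    intro a b hab f F U hU hsub hf hF hdiff hpde
    set a' := Fin.tail a with ha'
    set b' := Fin.tail b with hb'
    have hab' : ∀ j, a' j ≤ b' j := fun j => hab j.succ
    have h0 : a 0 ≤ b 0 := hab 0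
    rw [List.finRange_succ] at hdiff hpde
    obtain ⟨hg, hd0⟩ := hdiff
    set g := mixedD ((List.finRange n).map Fin.succ) F with hgdef
    have h
 : True := trivial
    have hmem : ∀ t ∈ Set.Icc (a 0) (b 0), ∀ x' ∈ Set.Icc a' b',
        Fin.cons t x' ∈ Set.Icc a b := fun t ht x' hx' => cons_mem_Icc.mpr ⟨ht, hx'⟩
    have contConsB : Continuous fun x' : Fin n → ℝ => (Fin.cons (b 0) x' : Fin (n+1) → ℝ) :=
      continuous_cons.comp (continuous_const.prodMk continuous_id)
    have contConsA : Continuous fun x' : Fin n → ℝ => (Fin.cons (a 0) x' : Fin (n+1) → ℝ) :=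
      continuous_cons.comp (continuous_const.prodMk continuous_id)
    -- FTC in the first variable
    have ftc : ∀ x' ∈ Set.Icc a' b',
        ∫ t in (a 0)..(b 0), f (Fin.cons t x')
          = g (Fin.cons (b 0) x') - g (Fin.cons (a 0) x') := by
      intro x' hx'
      have hderiv : ∀ t ∈ Set.uIcc (a 0) (b 0),
          HasDerivAt (fun u => g (Fin.cons u x')) (f (Fin.cons t x')) t := by
        intro t ht
        rw [Set.uIcc_of_le h0] at ht
        have hxU : Fin.cons t x' ∈ U := hsub (hmem t ht x' hx')
        have e1 : (fun u => g (Function.update (Fin.cons t x') 0 u))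
            = fun u => g (Fin.cons u x') := by
          funext u; rw [Fin.update_cons_zero]
        have hdiff0 : DifferentiableAt ℝ (fun u => g (Fin.cons u x')) t := by
          have h2 := hd0 _ hxU
          unfold PdAt at h2
          rw [e1] at h2
          simpa using h2
        have hval : deriv (fun u => g (Fin.cons u x')) t = f (Fin.cons t x') := by
          rw [← hpde _ hxU]
          show _ = pd 0 g (Fin.cons t x')
          unfold pd
          rw [e1]
          simp
        exact hval ▸ hdiff0.hasDerivAt
      have hint : IntervalIntegrable (fun t => f (Fin.cons t x')) volume (a 0) (b 0) := by
        apply ContinuousOn.intervalIntegrable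
        rw [Set.uIcc_of_le h0]
        refine hf.comp (continuous_cons.comp (continuous_id.prodMk continuous_const)).continuousOn ?_
        intro t ht
        exact hmem t ht x' hx'
      exact intervalIntegral.integral_eq_sub_of_hasDerivAt hderiv hint
    -- data for the induction hypothesis
    set Fb : (Fin n → ℝ) → ℝ := fun y => F (Fin.cons (b 0) y) with hFb
    set Fa : (Fin n → ℝ) → ℝ := fun y => F (Fin.cons (a 0) y) with hFa
    set F' : (Fin n → ℝ) → ℝ := fun y => Fb y - Fa y with hF'def
    set f' : (Fin n → ℝ) → ℝ :=
      fun x' => g (Fin.cons (b 0) x') - g (Fin.cons (a 0) x') with hf'def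
    set U' : Set (Fin n → ℝ) :=
      {x' | Fin.cons (b 0) x' ∈ U} ∩ {x' | Fin.cons (a 0) x' ∈ U} with hU'def
    have hU' : IsOpen U' := (hU.preimage contConsB).inter (hU.preimage contConsA)
    have hsub' : Set.Icc a' b' ⊆ U' := by
      intro x' hx'
      exact ⟨hsub (hmem (b 0) ⟨h0, le_refl _⟩ x' hx'),
             hsub (hmem (a 0) ⟨le_refl _, h0⟩ x' hx')⟩
    have hdiffB : MixedDiffOn (List.finRange n) Fb U' :=
      mixedDiffOn_mono (mixedDiffOn_slice _ F (b 0) U hg) Set.inter_subset_left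
    have hdiffA : MixedDiffOn (List.finRange n) Fa U' :=
      mixedDiffOn_mono (mixedDiffOn_slice _ F (a 0) U hg) Set.inter_subset_right
    obtain ⟨hsubeq, hsubdiff⟩ := mixedD_sub (List.finRange n) hU' hdiffB hdiffA
    have hpde' : ∀ x' ∈ U', mixedD (List.finRange n) F' x' = f' x' := by
      intro x' hx'
      rw [hsubeq x' hx', mixedD_slice, mixedD_slice]
    have hF'cont : ContinuousOn F' (Set.Icc a' b') := by
      apply ContinuousOn.sub
      · exact hF.comp contConsB.continuousOn fun x' hx' => hmem (b 0) ⟨h0, le_refl _⟩ x' hx'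
      · exact hF.comp contConsA.continuousOn fun x' hx' => hmem (a 0) ⟨le_refl _, h0⟩ x' hx'
    -- continuity of f' via a Tietze extension and parametric integrals
    have hf'cont : ContinuousOn f' (Set.Icc a' b') := by
      obtain ⟨G, hG⟩ := ContinuousMap.exists_restrict_eq (isClosed_Icc (a := a) (b := b))
        ⟨_, hf.restrict⟩
      have hGf : ∀ x ∈ Set.Icc a b, G x = f x := by
        intro x hx
        exact congrFun (congrArg ContinuousMap.toFun hG) ⟨x, hx⟩
      have hcontInt : Continuous fun x' : Fin n → ℝ => ∫ t in (a 0)..(b 0), G (Fin.cons t x') := by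
        apply intervalIntegral.continuous_parametric_intervalIntegral_of_continuous'
        exact G.continuous.comp (continuous_cons.comp (continuous_snd.prodMk continuous_fst))
      have heq : ∀ x' ∈ Set.Icc a' b',
          f' x' = ∫ t in (a 0)..(b 0), G (Fin.cons t x') := by
        intro x' hx'
        show g (Fin.cons (b 0) x') - g (Fin.cons (a 0) x') = _
        rw [← ftc x' hx']
        apply intervalIntegral.integral_congr
        intro t ht
        rw [Set.uIcc_of_le h0] at ht
        exact (hGf _ (hmem t ht x' hx')).symm
      exact hcontInt.continuousOn.congr heq
    have IH := ih a' b' hab' f' F' U' hU' hsub' hf'cont hF'cont hsubdiff hpde'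
    -- put everything together
    rw [fubini_box a b f hf]
    have hinner : ∀ x' ∈ Set.Icc a' b',
        ∫ t in Set.Icc (a 0) (b 0), f (Fin.cons t x') = f' x' := by
      intro x' hx'
      rw [integral_Icc_eq_integral_Ioc, ← intervalIntegral.integral_of_le h0]
      exact ftc x' hx'
    rw [setIntegral_congr_fun measurableSet_Icc hinner, IH]
    -- sum manipulation
    rw [sum_split fun s : Fin (n+1) → Bool =>
      (-1 : ℝ) ^ (Finset.univ.filter fun j => s j = false).card *
        F (fun j => if s j then b j else a j)]
    refine Finset.sum_congr rfl fun s' _ => ?_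
    rw [card_filter_cons, card_filter_cons, vertex_cons, vertex_cons]
    simp only [if_true, if_false, Bool.true_eq_false]
    rw [pow_add, pow_add]
    ring_nf
    simp [hF'def, hFb, hFa, a', b', pow_succ]
    ring


/-- (Fundamental Theorem of Calculus in `n` dimensions.)
Let `I = ∏_{j=1}^n [a_j, b_j]` with `a_j < b_j`, let `f : I → ℝ` be continuous, and let
`F : I → ℝ` be continuous such that the mixed partial derivative `∂_1 ⋯ ∂_n F` exists on
the interior `I̊` and satisfies `∂_1 ⋯ ∂_n F = f` on `I̊`. Then
`∫_I f = ∑_{s ∈ {0,1}^n} (−1)^{#_0(s)} F(P_s)`, where the vertex `P_s` has `j`-th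
coordinate `b_j` if `s_j = 1` and `a_j` if `s_j = 0`, and `#_0(s)` is the number of
zeros in `s`. -/
theorem integral_eq_alternating_vertex_sum (n : ℕ) (a b : Fin n → ℝ) (hab : ∀ j, a j < b j)
    (f F : (Fin n → ℝ) → ℝ)
    (hf : ContinuousOn f (Set.Icc a b))
    (hF : ContinuousOn F (Set.Icc a b))
    (hdiff : MixedDiffOn (List.finRange n) F (Set.pi Set.univ fun j => Set.Ioo (a j) (b j)))
    (hpde : ∀ x ∈ Set.pi Set.univ fun j => Set.Ioo (a j) (b j),
      mixedD (List.finRange n) F x = f x) :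
    ∫ x in Set.Icc a b, f x =
      ∑ s : Fin n → Bool,
        (-1 : ℝ) ^ (Finset.univ.filter fun j => s j = false).card *
          F (fun j => if s j then b j else a j) := by
  classical
  set V := Set.pi Set.univ fun j => Set.Ioo (a j) (b j) with hV
  have hVopen : IsOpen V := isOpen_set_pi Set.finite_univ fun i _ => isOpen_Ioo
  set ak : ℕ → Fin n → ℝ := fun k j => a j + (b j - a j) / ((k : ℝ) + 3) with hak
  set bk : ℕ → Fin n → ℝ := fun k j => b j - (b j - a j) / ((k : ℝ) + 3) with hbk
  have hc : ∀ j, 0 < b j - a j := fun j => sub_pos.2 (hab j)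
  have hd : ∀ (k : ℕ) (j : Fin n), 0 < (b j - a j) / ((k : ℝ) + 3) := fun k j =>
    div_pos (hc j) (by positivity)
  have hd3 : ∀ (k : ℕ) (j : Fin n), (b j - a j) / ((k : ℝ) + 3) ≤ (b j - a j) / 3 := by
    intro k j
    gcongr
    · exact (hc j).le
    · linarith [Nat.cast_nonneg (α := ℝ) k]
  have hmono_d : ∀ {k m : ℕ}, k ≤ m → ∀ j, (b j - a j) / ((m : ℝ) + 3)
      ≤ (b j - a j) / ((k : ℝ) + 3) := by
    intro k m hkm j
    have hkm' : ((k : ℝ) + 3) ≤ (m : ℝ) + 3 := by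
      have : (k : ℝ) ≤ (m : ℝ) := Nat.cast_le.2 hkm
      linarith
    gcongr
    exact (hc j).le
  have haab : ∀ (k : ℕ) (j : Fin n), a j < ak k j := fun k j =>
    lt_add_of_pos_right _ (hd k j)
  have hbbk : ∀ (k : ℕ) (j : Fin n), bk k j < b j := fun k j =>
    sub_lt_self _ (hd k j)
  have hakbk : ∀ (k : ℕ) (j : Fin n), ak k j ≤ bk k j := by
    intro k j
    have h1 := hd3 k j
    have h2 := hc j
    show a j + _ ≤ b j - _
    linarith
  have hsubV : ∀ k, Set.Icc (ak k) (bk k) ⊆ V := by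
    intro k x hx
    intro j _
    exact ⟨lt_of_lt_of_le (haab k j) (hx.1 j), lt_of_le_of_lt (hx.2 j) (hbbk k j)⟩
  have hsubIcc : ∀ k, Set.Icc (ak k) (bk k) ⊆ Set.Icc a b := fun k =>
    Set.Icc_subset_Icc (fun j => (haab k j).le) (fun j => (hbbk k j).le)
  have hmono : Monotone fun k => Set.Icc (ak k) (bk k) := by
    intro k m hkm
    apply Set.Icc_subset_Icc
    · intro j
      show a j + _ ≤ a j + _
      linarith [hmono_d hkm j]
    · intro j
      show b j - _ ≤ b j - _
      linarith [hmono_d hkm j]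
  have key : ∀ k : ℕ, ∫ x in Set.Icc (ak k) (bk k), f x
      = ∑ s : Fin n → Bool,
        (-1 : ℝ) ^ (Finset.univ.filter fun j => s j = false).card *
          F (fun j => if s j then bk k j else ak k j) := by
    intro k
    exact aux_ftc n (ak k) (bk k) (hakbk k) f F V hVopen (hsubV k)
      (hf.mono (hsubIcc k)) (hF.mono (hsubIcc k)) hdiff hpde
  -- limits of denominators
  have htends : ∀ j : Fin n, Filter.Tendsto (fun k : ℕ => (b j - a j) / ((k : ℝ) + 3))
      Filter.atTop (nhds 0) := by
    intro j
    have h := (tendsto_const_div_atTop_nhds_zero_nat (b j - a j)).comp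
      (Filter.tendsto_add_atTop_nat 3)
    have heq : (fun k : ℕ => (b j - a j) / ((k : ℝ) + 3))
        = (fun m : ℕ => (b j - a j) / (m : ℝ)) ∘ (fun k => k + 3) := by
      funext k
      simp only [Function.comp]
      push_cast
      ring_nf
    rw [heq]
    exact h
  -- LHS limit
  have hfInt : IntegrableOn f (Set.Icc a b) := hf.integrableOn_compact isCompact_Icc
  have hUsub : (⋃ k, Set.Icc (ak k) (bk k)) ⊆ Set.Icc a b := Set.iUnion_subset hsubIcc
  have hL : Filter.Tendsto (fun k => ∫ x in Set.Icc (ak k) (bk k), f x) Filter.atTop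
      (nhds (∫ x in ⋃ k, Set.Icc (ak k) (bk k), f x)) :=
    tendsto_setIntegral_of_monotone (fun k => measurableSet_Icc) hmono (hfInt.mono_set hUsub)
  have hVsubU : V ⊆ ⋃ k, Set.Icc (ak k) (bk k) := by
    intro x hx
    have hx' : ∀ j, x j ∈ Set.Ioo (a j) (b j) := fun j => hx j (Set.mem_univ j)
    have hev : ∀ j : Fin n, ∀ᶠ k : ℕ in Filter.atTop,
        (b j - a j) / ((k : ℝ) + 3) < min (x j - a j) (b j - x j) := by
      intro j
      have hmin : 0 < min (x j - a j) (b j - x j) :=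
        lt_min (by linarith [(hx' j).1]) (by linarith [(hx' j).2])
      exact (htends j).eventually_lt_const hmin
    obtain ⟨k, hk⟩ := (Filter.eventually_all.2 hev).exists
    refine Set.mem_iUnion.2 ⟨k, ?_, ?_⟩
    · intro j
      have h1 := lt_of_lt_of_le (hk j) (min_le_left _ _)
      show a j + _ ≤ x j
      linarith
    · intro j
      have h1 := lt_of_lt_of_le (hk j) (min_le_right _ _)
      show x j ≤ b j - _
      linarith
  have hVsubIcc : V ⊆ Set.Icc a b := by
    rw [← Set.pi_univ_Icc]
    exact Set.pi_mono fun i _ => Set.Ioo_subset_Icc_self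
  have hIccV : volume (Set.Icc a b) = volume V := by
    rw [Real.volume_Icc_pi, hV, volume_pi, Measure.pi_pi]
    simp [Real.volume_Ioo]
  have hfin : volume V ≠ ⊤ := by
    rw [← hIccV, Real.volume_Icc_pi]
    exact (ENNReal.prod_lt_top fun i _ => ENNReal.ofReal_lt_top).ne
  have hnull : volume (Set.Icc a b \ V) = 0 := by
    rw [measure_diff hVsubIcc hVopen.measurableSet.nullMeasurableSet hfin, hIccV, tsub_self]
  have haeeq : (⋃ k, Set.Icc (ak k) (bk k)) =ᵐ[volume] Set.Icc a b := by
    rw [MeasureTheory.ae_eq_set]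
    constructor
    · rw [Set.diff_eq_empty.2 hUsub]
      simp
    · exact measure_mono_null (Set.diff_subset_diff_right hVsubU) hnull
  rw [← setIntegral_congr_set haeeq] at *
  -- RHS limit
  have hR : Filter.Tendsto (fun k => ∑ s : Fin n → Bool,
      (-1 : ℝ) ^ (Finset.univ.filter fun j => s j = false).card *
        F (fun j => if s j then bk k j else ak k j)) Filter.atTop
      (nhds (∑ s : Fin n → Bool,
      (-1 : ℝ) ^ (Finset.univ.filter fun j => s j = false).card *
        F (fun j => if s j then b j else a j))) := by
    apply tendsto_finset_sum
    intro s _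
    apply Filter.Tendsto.const_mul
    have hvmem : (fun j => if s j then b j else a j) ∈ Set.Icc a b := by
      constructor <;> intro j <;> by_cases hs : s j <;> simp [hs] <;> linarith [hab j]
    have hvk_mem : ∀ k : ℕ, (fun j => if s j then bk k j else ak k j) ∈ Set.Icc a b := by
      intro k
      constructor <;> intro j <;> by_cases hs : s j <;> simp [hs] <;>
        linarith [haab k j, hbbk k j, hakbk k j]
    have htv : Filter.Tendsto (fun k : ℕ => fun j => if s j then bk k j else ak k j)
        Filter.atTop (nhds fun j => if s j then b j else a j) := by
      rw [tendsto_pi_nhds]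
      intro j
      by_cases hs : s j
      · simp only [hs, if_true]
        have : Filter.Tendsto (fun k : ℕ => bk k j) Filter.atTop (nhds (b j - 0)) :=
          Filter.Tendsto.sub tendsto_const_nhds (htends j)
        simpa using this
      · simp only [hs, if_false]
        have : Filter.Tendsto (fun k : ℕ => ak k j) Filter.atTop (nhds (a j + 0)) :=
          Filter.Tendsto.add tendsto_const_nhds (htends j)
        simpa using this
    exact (hF _ hvmem).tendsto.comp
      (tendsto_nhdsWithin_iff.mpr ⟨htv, Filter.Eventually.of_forall hvk_mem⟩)
  have hfun : (fun k => ∫ x in Set.Icc (ak k) (bk k), f x)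
      = fun k : ℕ => ∑ s : Fin n → Bool,
        (-1 : ℝ) ^ (Finset.univ.filter fun j => s j = false).card *
          F (fun j => if s j then bk k j else ak k j) := funext key
  rw [hfun] at hL
  exact tendsto_nhds_unique hL hR
end

section
/- Let a_1 < b_1 and a_2 < b_2 be real numbers, let f : [a_1,b_1] × [a_2,b_2] → ℝ be continuous, and let F : [a_1,b_1] × [a_2,b_2] → ℝ be continuous such that on the open rectangle (a_1,b_1) × (a_2,b_2) the mixed partial derivative ∂_x ∂_y F exists and satisfies ∂_x ∂_y F(x,y) = f(x,y). Then ∫_{[a_1,b_1] × [a_2,b_2]} f(x,y) dx dy = F(b_1,b_2) − F(a_1,b_2) + F(a_1,a_2) − F(b_1,a_2). -/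
open MeasureTheory

/-- The partial derivative of `F : ℝ × ℝ → ℝ` with respect to its second variable. -/
noncomputable def pdy (F : ℝ × ℝ → ℝ) : ℝ × ℝ → ℝ :=
  fun p => deriv (fun v : ℝ => F (p.1, v)) p.2

/-- The partial derivative of `G : ℝ × ℝ → ℝ` with respect to its first variable. -/
noncomputable def pdx (G : ℝ × ℝ → ℝ) : ℝ × ℝ → ℝ :=
  fun p => deriv (fun u : ℝ => G (u, p.2)) p.1

/-- Fubini swap for interval integrals of a continuous function. -/
lemma swap_aux_2D {g : ℝ × ℝ → ℝ} (hg : Continuous g) {x₁ x₂ y₁ y₂ : ℝ}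
    (hx : x₁ ≤ x₂) (hy : y₁ ≤ y₂) :
    (∫ y in y₁..y₂, ∫ x in x₁..x₂, g (x, y)) = ∫ x in x₁..x₂, ∫ y in y₁..y₂, g (x, y) := by
  have hint : Integrable (Function.uncurry fun y x => g (x, y))
      ((volume.restrict (Set.Ioc y₁ y₂)).prod (volume.restrict (Set.Ioc x₁ x₂))) := by
    rw [Measure.prod_restrict]
    have hc : ContinuousOn (Function.uncurry fun y x => g (x, y))
        (Set.Icc y₁ y₂ ×ˢ Set.Icc x₁ x₂) :=
      (hg.comp continuous_swap).continuousOn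
    exact ((hc.integrableOn_compact (isCompact_Icc.prod isCompact_Icc)).mono_set
      (Set.prod_mono Set.Ioc_subset_Icc_self Set.Ioc_subset_Icc_self))
  have := MeasureTheory.integral_integral_swap hint
  rw [intervalIntegral.integral_of_le hy, intervalIntegral.integral_of_le hx]
  simp_rw [intervalIntegral.integral_of_le hx, intervalIntegral.integral_of_le hy]
  exact this

/-- (Fundamental Theorem of Calculus in 2D.)
Let `a₁ < b₁` and `a₂ < b₂`, let `f : [a₁,b₁] × [a₂,b₂] → ℝ` be continuous, and let
`F : [a₁,b₁] × [a₂,b₂] → ℝ` be continuous such that on the open rectangle the mixed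
partial derivative `∂_x ∂_y F` exists (first differentiating in the second variable `y`,
then in the first variable `x`) and satisfies `∂_x ∂_y F = f`. Then
`∫_{[a₁,b₁] × [a₂,b₂]} f = F(b₁,b₂) − F(a₁,b₂) + F(a₁,a₂) − F(b₁,a₂)`. -/
theorem integral_eq_alternating_vertex_sum_2D (a₁ b₁ a₂ b₂ : ℝ) (h₁ : a₁ < b₁) (h₂ : a₂ < b₂)
    (f F : ℝ × ℝ → ℝ)
    (hf : ContinuousOn f (Set.Icc a₁ b₁ ×ˢ Set.Icc a₂ b₂))
    (hF : ContinuousOn F (Set.Icc a₁ b₁ ×ˢ Set.Icc a₂ b₂))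
    (hdy : ∀ p ∈ Set.Ioo a₁ b₁ ×ˢ Set.Ioo a₂ b₂,
      DifferentiableAt ℝ (fun v : ℝ => F (p.1, v)) p.2)
    (hdx : ∀ p ∈ Set.Ioo a₁ b₁ ×ˢ Set.Ioo a₂ b₂,
      DifferentiableAt ℝ (fun u : ℝ => pdy F (u, p.2)) p.1)
    (hpde : ∀ p ∈ Set.Ioo a₁ b₁ ×ˢ Set.Ioo a₂ b₂, pdx (pdy F) p = f p) :
    ∫ p in Set.Icc a₁ b₁ ×ˢ Set.Icc a₂ b₂, f p =
      F (b₁, b₂) - F (a₁, b₂) + F (a₁, a₂) - F (b₁, a₂) := by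
  set s : Set (ℝ × ℝ) := Set.Icc a₁ b₁ ×ˢ Set.Icc a₂ b₂ with hs_def
  have hs_closed : IsClosed s := (isClosed_Icc.prod isClosed_Icc)
  -- Tietze extension of f to a continuous g on all of ℝ².
  obtain ⟨G, hG⟩ := ContinuousMap.exists_restrict_eq (Y := ℝ) hs_closed
    ⟨s.restrict f, hf.restrict⟩
  set g : ℝ × ℝ → ℝ := ⇑G with hg_def
  have hg : Continuous g := G.continuous
  have hgf : ∀ p ∈ s, g p = f p := by
    intro p hp
    have := congrFun (congrArg DFunLike.coe hG) ⟨p, hp⟩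
    exact this
  have hsub : Set.Ioo a₁ b₁ ×ˢ Set.Ioo a₂ b₂ ⊆ s :=
    Set.prod_mono Set.Ioo_subset_Icc_self Set.Ioo_subset_Icc_self
  -- FTC in x
  have h1 : ∀ y ∈ Set.Ioo a₂ b₂, ∀ x₁ ∈ Set.Ioo a₁ b₁, ∀ x₂ ∈ Set.Ioo a₁ b₁,
      (∫ x in x₁..x₂, g (x, y)) = pdy F (x₂, y) - pdy F (x₁, y) := by
    intro y hy x₁ hx₁ x₂ hx₂
    apply intervalIntegral.integral_eq_sub_of_hasDerivAt
    · intro x hx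
      have hxI : x ∈ Set.Ioo a₁ b₁ := Set.ordConnected_Ioo.uIcc_subset hx₁ hx₂ hx
      have hp : ((x, y) : ℝ × ℝ) ∈ Set.Ioo a₁ b₁ ×ˢ Set.Ioo a₂ b₂ := ⟨hxI, hy⟩
      have hd := (hdx (x, y) hp).hasDerivAt
      have : deriv (fun u : ℝ => pdy F (u, y)) x = g (x, y) := by
        have h1 : deriv (fun u : ℝ => pdy F (u, y)) x = pdx (pdy F) (x, y) := rfl
        rw [h1, hpde (x, y) hp, ← hgf (x, y) (hsub hp)]
      rw [this] at hd
      exact hd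
    · exact (hg.comp (Continuous.prodMk_left y)).intervalIntegrable x₁ x₂
  -- FTC in y
  have h2 : ∀ x₁ ∈ Set.Ioo a₁ b₁, ∀ x₂ ∈ Set.Ioo a₁ b₁, ∀ y₁ ∈ Set.Ioo a₂ b₂,
      ∀ y₂ ∈ Set.Ioo a₂ b₂,
      (∫ y in y₁..y₂, ∫ x in x₁..x₂, g (x, y)) =
        (F (x₂, y₂) - F (x₁, y₂)) - (F (x₂, y₁) - F (x₁, y₁)) := by
    intro x₁ hx₁ x₂ hx₂ y₁ hy₁ y₂ hy₂
    apply intervalIntegral.integral_eq_sub_of_hasDerivAt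
    · intro y hy
      have hyI : y ∈ Set.Ioo a₂ b₂ := Set.ordConnected_Ioo.uIcc_subset hy₁ hy₂ hy
      have hd2 := ((hdy (x₂, y) ⟨hx₂, hyI⟩).hasDerivAt).sub
        ((hdy (x₁, y) ⟨hx₁, hyI⟩).hasDerivAt)
      rw [show deriv (fun v : ℝ => F (x₂, v)) y - deriv (fun v : ℝ => F (x₁, v)) y
          = pdy F (x₂, y) - pdy F (x₁, y) from rfl, ← h1 y hyI x₁ hx₁ x₂ hx₂] at hd2
      exact hd2
    · have hc : Continuous fun y => ∫ x in x₁..x₂, g (x, y) := by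
        apply intervalIntegral.continuous_parametric_intervalIntegral_of_continuous'
          (f := fun (y : ℝ) (x : ℝ) => g (x, y))
        exact hg.comp continuous_swap
      exact hc.intervalIntegrable y₁ y₂
  -- stage 1: extend in x to the closed interval
  have stage1 : ∀ y₁ ∈ Set.Ioo a₂ b₂, ∀ y₂ ∈ Set.Ioo a₂ b₂, y₁ ≤ y₂ →
      (∫ y in y₁..y₂, ∫ x in a₁..b₁, g (x, y)) =
        (F (b₁, y₂) - F (a₁, y₂)) - (F (b₁, y₁) - F (a₁, y₁)) := by
    intro y₁ hy₁ y₂ hy₂ hy12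
    set φ : ℝ → ℝ := fun t => ∫ y in y₁..y₂, g (t, y) with hφ_def
    have hφc : Continuous φ := by
      apply intervalIntegral.continuous_parametric_intervalIntegral_of_continuous'
        (f := fun (t : ℝ) (y : ℝ) => g (t, y))
      exact hg
    set Q : ℝ → ℝ := fun x => ∫ t in a₁..x, φ t with hQ_def
    have hQc : Continuous Q :=
      intervalIntegral.continuous_primitive (fun _ _ => hφc.intervalIntegrable _ _) a₁
    set d : ℝ := b₁ - a₁ with hd_def
    have hd0 : 0 < d := by simp [hd_def]; linarith
    set u : ℕ → ℝ := fun n => a₁ + d / (n + 2) with hu_def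
    set v : ℕ → ℝ := fun n => b₁ - d / (n + 2) with hv_def
    have hfrac : ∀ n : ℕ, 0 < d / ((n : ℝ) + 2) ∧ d / ((n : ℝ) + 2) ≤ d / 2 := by
      intro n
      constructor
      · positivity
      · apply div_le_div_of_nonneg_left hd0.le (by norm_num)
        · norm_num
    have hu_mem : ∀ n, u n ∈ Set.Ioo a₁ b₁ := by
      intro n
      obtain ⟨hp, hle⟩ := hfrac n
      constructor
      · simp [hu_def]; linarith
      · simp only [hu_def]; nlinarith
    have hv_mem : ∀ n, v n ∈ Set.Ioo a₁ b₁ := by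
      intro n
      obtain ⟨hp, hle⟩ := hfrac n
      constructor
      · simp only [hv_def]; nlinarith
      · simp [hv_def]; linarith
    have huv : ∀ n, u n ≤ v n := by
      intro n
      obtain ⟨hp, hle⟩ := hfrac n
      simp only [hu_def, hv_def]
      nlinarith
    have htend0 : Filter.Tendsto (fun n : ℕ => d / ((n : ℝ) + 2)) Filter.atTop (nhds 0) := by
      apply Filter.Tendsto.div_atTop (tendsto_const_nhds)
      exact Filter.tendsto_atTop_add_const_right _ 2 tendsto_natCast_atTop_atTop
    have hu_tend : Filter.Tendsto u Filter.atTop (nhds a₁) := by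
      have := Filter.Tendsto.const_add a₁ htend0
      simpa using this
    have hv_tend : Filter.Tendsto v Filter.atTop (nhds b₁) := by
      have := Filter.Tendsto.const_sub b₁ htend0
      simpa using this
    -- key identity for interior x-intervals
    have key : ∀ n : ℕ, Q (v n) - Q (u n) =
        (F (v n, y₂) - F (u n, y₂)) - (F (v n, y₁) - F (u n, y₁)) := by
      intro n
      have hQdiff : Q (v n) - Q (u n) = ∫ t in (u n)..(v n), φ t := by
        rw [hQ_def]
        exact intervalIntegral.integral_interval_sub_left
          (hφc.intervalIntegrable _ _) (hφc.intervalIntegrable _ _)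
      rw [hQdiff, hφ_def]
      rw [← swap_aux_2D hg (huv n) hy12]
      exact h2 (u n) (hu_mem n) (v n) (hv_mem n) y₁ hy₁ y₂ hy₂
    -- pass to the limit
    have hFc : ∀ (x : ℝ) (y : ℝ), x ∈ Set.Icc a₁ b₁ → y ∈ Set.Icc a₂ b₂ →
        ∀ (w : ℕ → ℝ), (∀ n, w n ∈ Set.Icc a₁ b₁) →
        Filter.Tendsto w Filter.atTop (nhds x) →
        Filter.Tendsto (fun n => F (w n, y)) Filter.atTop (nhds (F (x, y))) := by
      intro x y hx hy w hw hwt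
      have hcw : ContinuousWithinAt F s (x, y) := hF (x, y) ⟨hx, hy⟩
      apply hcw.tendsto.comp
      rw [tendsto_nhdsWithin_iff]
      exact ⟨hwt.prodMk_nhds tendsto_const_nhds,
        Filter.Eventually.of_forall fun n => ⟨hw n, hy⟩⟩
    have hy₁' : y₁ ∈ Set.Icc a₂ b₂ := Set.Ioo_subset_Icc_self hy₁
    have hy₂' : y₂ ∈ Set.Icc a₂ b₂ := Set.Ioo_subset_Icc_self hy₂
    have hu_mem' : ∀ n, u n ∈ Set.Icc a₁ b₁ := fun n => Set.Ioo_subset_Icc_self (hu_mem n)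
    have hv_mem' : ∀ n, v n ∈ Set.Icc a₁ b₁ := fun n => Set.Ioo_subset_Icc_self (hv_mem n)
    have hL : Filter.Tendsto (fun n => Q (v n) - Q (u n)) Filter.atTop
        (nhds (Q b₁ - Q a₁)) :=
      ((hQc.continuousAt.tendsto.comp hv_tend).sub (hQc.continuousAt.tendsto.comp hu_tend))
    have hR : Filter.Tendsto (fun n =>
        (F (v n, y₂) - F (u n, y₂)) - (F (v n, y₁) - F (u n, y₁))) Filter.atTop
        (nhds ((F (b₁, y₂) - F (a₁, y₂)) - (F (b₁, y₁) - F (a₁, y₁)))) := by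
      exact ((hFc b₁ y₂ (Set.right_mem_Icc.2 h₁.le) hy₂' v hv_mem' hv_tend).sub
        (hFc a₁ y₂ (Set.left_mem_Icc.2 h₁.le) hy₂' u hu_mem' hu_tend)).sub
        ((hFc b₁ y₁ (Set.right_mem_Icc.2 h₁.le) hy₁' v hv_mem' hv_tend).sub
        (hFc a₁ y₁ (Set.left_mem_Icc.2 h₁.le) hy₁' u hu_mem' hu_tend))
    have heq : Q b₁ - Q a₁ = (F (b₁, y₂) - F (a₁, y₂)) - (F (b₁, y₁) - F (a₁, y₁)) :=
      tendsto_nhds_unique (by simpa only [key] using hL) hR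
    have hQa : Q a₁ = 0 := intervalIntegral.integral_same
    have hQb : Q b₁ = ∫ y in y₁..y₂, ∫ x in a₁..b₁, g (x, y) := by
      rw [hQ_def, hφ_def]
      exact (swap_aux_2D hg h₁.le hy12).symm
    rw [← hQb, ← sub_zero (Q b₁), ← hQa]
    exact heq
  -- stage 2: extend in y
  set Φ : ℝ → ℝ := fun t => ∫ x in a₁..b₁, g (x, t) with hΦ_def
  have hΦc : Continuous Φ := by
    apply intervalIntegral.continuous_parametric_intervalIntegral_of_continuous'
      (f := fun (t : ℝ) (x : ℝ) => g (x, t))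
    exact hg.comp continuous_swap
  set H : ℝ → ℝ := fun y => ∫ t in a₂..y, Φ t with hH_def
  have hHc : Continuous H :=
    intervalIntegral.continuous_primitive (fun _ _ => hΦc.intervalIntegrable _ _) a₂
  set e : ℝ := b₂ - a₂ with he_def
  have he0 : 0 < e := by simp [he_def]; linarith
  set p : ℕ → ℝ := fun n => a₂ + e / (n + 2) with hp_def
  set q : ℕ → ℝ := fun n => b₂ - e / (n + 2) with hq_def
  have hfrac : ∀ n : ℕ, 0 < e / ((n : ℝ) + 2) ∧ e / ((n : ℝ) + 2) ≤ e / 2 := by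
    intro n
    constructor
    · positivity
    · apply div_le_div_of_nonneg_left he0.le (by norm_num)
      · norm_num
  have hp_mem : ∀ n, p n ∈ Set.Ioo a₂ b₂ := by
    intro n
    obtain ⟨hp0, hle⟩ := hfrac n
    constructor
    · simp [hp_def]; linarith
    · simp only [hp_def]; nlinarith
  have hq_mem : ∀ n, q n ∈ Set.Ioo a₂ b₂ := by
    intro n
    obtain ⟨hp0, hle⟩ := hfrac n
    constructor
    · simp only [hq_def]; nlinarith
    · simp [hq_def]; linarith
  have hpq : ∀ n, p n ≤ q n := by
    intro n
    obtain ⟨hp0, hle⟩ := hfrac n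
    simp only [hp_def, hq_def]
    nlinarith
  have htend0 : Filter.Tendsto (fun n : ℕ => e / ((n : ℝ) + 2)) Filter.atTop (nhds 0) := by
    apply Filter.Tendsto.div_atTop (tendsto_const_nhds)
    exact Filter.tendsto_atTop_add_const_right _ 2 tendsto_natCast_atTop_atTop
  have hp_tend : Filter.Tendsto p Filter.atTop (nhds a₂) := by
    have := Filter.Tendsto.const_add a₂ htend0
    simpa using this
  have hq_tend : Filter.Tendsto q Filter.atTop (nhds b₂) := by
    have := Filter.Tendsto.const_sub b₂ htend0
    simpa using this
  have key2 : ∀ n : ℕ, H (q n) - H (p n) =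
      (F (b₁, q n) - F (a₁, q n)) - (F (b₁, p n) - F (a₁, p n)) := by
    intro n
    have hHdiff : H (q n) - H (p n) = ∫ t in (p n)..(q n), Φ t :=
      intervalIntegral.integral_interval_sub_left
        (hΦc.intervalIntegrable _ _) (hΦc.intervalIntegrable _ _)
    rw [hHdiff]
    exact stage1 (p n) (hp_mem n) (q n) (hq_mem n) (hpq n)
  have hFc2 : ∀ (x : ℝ) (y : ℝ), x ∈ Set.Icc a₁ b₁ → y ∈ Set.Icc a₂ b₂ →
      ∀ (w : ℕ → ℝ), (∀ n, w n ∈ Set.Icc a₂ b₂) →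
      Filter.Tendsto w Filter.atTop (nhds y) →
      Filter.Tendsto (fun n => F (x, w n)) Filter.atTop (nhds (F (x, y))) := by
    intro x y hx hy w hw hwt
    have hcw : ContinuousWithinAt F s (x, y) := hF (x, y) ⟨hx, hy⟩
    apply hcw.tendsto.comp
    rw [tendsto_nhdsWithin_iff]
    exact ⟨(tendsto_const_nhds).prodMk_nhds hwt,
      Filter.Eventually.of_forall fun n => ⟨hx, hw n⟩⟩
  have ha₁ : a₁ ∈ Set.Icc a₁ b₁ := Set.left_mem_Icc.2 h₁.le
  have hb₁ : b₁ ∈ Set.Icc a₁ b₁ := Set.right_mem_Icc.2 h₁.le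
  have ha₂ : a₂ ∈ Set.Icc a₂ b₂ := Set.left_mem_Icc.2 h₂.le
  have hb₂ : b₂ ∈ Set.Icc a₂ b₂ := Set.right_mem_Icc.2 h₂.le
  have hp_mem' : ∀ n, p n ∈ Set.Icc a₂ b₂ := fun n => Set.Ioo_subset_Icc_self (hp_mem n)
  have hq_mem' : ∀ n, q n ∈ Set.Icc a₂ b₂ := fun n => Set.Ioo_subset_Icc_self (hq_mem n)
  have hL : Filter.Tendsto (fun n => H (q n) - H (p n)) Filter.atTop
      (nhds (H b₂ - H a₂)) :=
    ((hHc.continuousAt.tendsto.comp hq_tend).sub (hHc.continuousAt.tendsto.comp hp_tend))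
  have hR : Filter.Tendsto (fun n =>
      (F (b₁, q n) - F (a₁, q n)) - (F (b₁, p n) - F (a₁, p n))) Filter.atTop
      (nhds ((F (b₁, b₂) - F (a₁, b₂)) - (F (b₁, a₂) - F (a₁, a₂)))) := by
    exact ((hFc2 b₁ b₂ hb₁ hb₂ q hq_mem' hq_tend).sub
      (hFc2 a₁ b₂ ha₁ hb₂ q hq_mem' hq_tend)).sub
      ((hFc2 b₁ a₂ hb₁ ha₂ p hp_mem' hp_tend).sub
      (hFc2 a₁ a₂ ha₁ ha₂ p hp_mem' hp_tend))
  have heq2 : H b₂ - H a₂ =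
      (F (b₁, b₂) - F (a₁, b₂)) - (F (b₁, a₂) - F (a₁, a₂)) :=
    tendsto_nhds_unique (by simpa only [key2] using hL) hR
  -- Now identify the double integral with H b₂.
  have hHa : H a₂ = 0 := intervalIntegral.integral_same
  have hIg : (∫ pt in s, f pt) = ∫ y in a₂..b₂, Φ y := by
    rw [setIntegral_congr_fun (hs_closed.measurableSet) (fun pt hpt => (hgf pt hpt).symm)]
    -- now integral of g over s
    have hint : IntegrableOn g s volume := hg.continuousOn.integrableOn_compact
      (isCompact_Icc.prod isCompact_Icc)
    rw [hs_def] at hint ⊢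
    rw [MeasureTheory.Measure.volume_eq_prod] at hint ⊢
    rw [MeasureTheory.setIntegral_prod g hint]
    have huncurry : Function.uncurry (fun x y => g (x, y)) = g := by
      ext z
      simp [Function.uncurry]
    have hswap2 : (∫ x in Set.Icc a₁ b₁, ∫ y in Set.Icc a₂ b₂, g (x, y)) =
        ∫ y in Set.Icc a₂ b₂, ∫ x in Set.Icc a₁ b₁, g (x, y) := by
      apply MeasureTheory.integral_integral_swap (f := fun x y => g (x, y))
      rw [huncurry, Measure.prod_restrict]
      exact hint
    rw [hswap2]
    have hinner : ∀ y : ℝ, (∫ x in Set.Icc a₁ b₁, g (x, y)) = Φ y := by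
      intro y
      show _ = ∫ x in a₁..b₁, g (x, y)
      rw [intervalIntegral.integral_of_le h₁.le, MeasureTheory.integral_Icc_eq_integral_Ioc]
    simp_rw [hinner]
    rw [intervalIntegral.integral_of_le h₂.le, MeasureTheory.integral_Icc_eq_integral_Ioc]
  rw [hIg]
  have : (∫ y in a₂..b₂, Φ y) = H b₂ - H a₂ := by rw [hHa, hH_def]; ring
  rw [this, heq2]
  ring
end

section
/- Let I = ∏_{j=1}^n [a_j,b_j] with a_j < b_j, let f : I → ℝ be continuous, and let F, F̃ : I → ℝ both be continuous functions whose mixed partial derivatives ∂_1 ⋯ ∂_n F and ∂_1 ⋯ ∂_n F̃ exist on the interior I̊ = ∏_{j=1}^n (a_j,b_j) and both equal f there. Then the combinatorial formula gives the same value for both: ∑_{s ∈ {0,1}^n} (−1)^{#_0(s)} F(P_s) = ∑_{s ∈ {0,1}^n} (−1)^{#_0(s)} F̃(P_s), where P_s is the vertex of I with j-th coordinate b_j if s_j = 1 and a_j if s_j = 0, and #_0(s) is the number of zeros in s. -/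
open MeasureTheory

/-! ### Auxiliary definitions -/

/-- Iterated difference operator over the coordinates in `l`. -/
noncomputable def altSum {n : ℕ} (a' b' : Fin n → ℝ) :
    List (Fin n) → ((Fin n → ℝ) → ℝ) → (Fin n → ℝ) → ℝ
  | [], F, x => F x
  | i :: l, F, x => altSum a' b' l F (Function.update x i (b' i)) -
      altSum a' b' l F (Function.update x i (a' i))

/-- Iterated integral over the coordinates in `l`. -/
noncomputable def itInt {n : ℕ} (a' b' : Fin n → ℝ) :
    List (Fin n) → ((Fin n → ℝ) → ℝ) → (Fin n → ℝ) → ℝ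
  | [], g, x => g x
  | i :: l, g, x => ∫ t in (a' i)..(b' i), itInt a' b' l g (Function.update x i t)

lemma mixedDiffOn_tail {n : ℕ} {l : List (Fin n)} {F s} (h : MixedDiffOn l F s) :
    MixedDiffOn l.tail F s := by
  cases l with
  | nil => trivial
  | cons i l => exact h.1

lemma mixedDiffOn_drop {n : ℕ} {l : List (Fin n)} {F s} (h : MixedDiffOn l F s) (k : ℕ) :
    MixedDiffOn (l.drop k) F s := by
  induction k with
  | zero => simpa using h
  | succ k ih =>
      rw [← List.tail_drop]
      exact mixedDiffOn_tail ih

lemma altSum_append_singleton {n : ℕ} (a' b' : Fin n → ℝ) (i : Fin n) :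
    ∀ (l : List (Fin n)) (F : (Fin n → ℝ) → ℝ) (x : Fin n → ℝ),
      altSum a' b' (l ++ [i]) F x =
        altSum a' b' l (fun y => F (Function.update y i (b' i))) x -
          altSum a' b' l (fun y => F (Function.update y i (a' i))) x
  | [], F, x => by simp [altSum]
  | j :: l, F, x => by
      simp only [List.cons_append, altSum, List.append_eq]
      rw [altSum_append_singleton a' b' i l, altSum_append_singleton a' b' i l]
      ring

lemma altSum_comp_update {n : ℕ} (a' b' : Fin n → ℝ) {k : Fin n} (c : ℝ) :
    ∀ (l : List (Fin n)), k ∉ l → ∀ (F : (Fin n → ℝ) → ℝ) (x : Fin n → ℝ),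
      altSum a' b' l (fun y => F (Function.update y k c)) x =
        altSum a' b' l F (Function.update x k c)
  | [], _, F, x => by simp [altSum]
  | j :: l, hk, F, x => by
      have hjk : j ≠ k := fun h => hk (h ▸ List.mem_cons_self)
      have hkl : k ∉ l := fun h => hk (List.mem_cons_of_mem _ h)
      simp only [altSum]
      rw [altSum_comp_update a' b' c l hkl F, altSum_comp_update a' b' c l hkl F,
        Function.update_comm hjk, Function.update_comm hjk]

lemma hasDerivAt_altSum {n : ℕ} (a' b' : Fin n → ℝ) {k : Fin n} {G : (Fin n → ℝ) → ℝ}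
    {s : Set (Fin n → ℝ)} (hs : ∀ y ∈ s, PdAt k G y)
    (hupd : ∀ y ∈ s, ∀ i : Fin n,
      Function.update y i (a' i) ∈ s ∧ Function.update y i (b' i) ∈ s)
    (l : List (Fin n)) (hk : k ∉ l) (x : Fin n → ℝ) (t : ℝ)
    (hmem : Function.update x k t ∈ s) :
    HasDerivAt (fun u => altSum a' b' l G (Function.update x k u))
      (altSum a' b' l (pd k G) (Function.update x k t)) t := by
  induction l generalizing x with
  | nil =>
      have h := hs _ hmem
      unfold PdAt at h
      simp only [Function.update_idem, Function.update_self] at h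
      have h2 := h.hasDerivAt
      have h3 : pd k G (Function.update x k t) = deriv (fun u => G (Function.update x k u)) t := by
        simp [pd, Function.update_idem, Function.update_self]
      simpa [altSum, h3] using h2
  | cons j l ih =>
      have hjk : j ≠ k := fun h => hk (h ▸ List.mem_cons_self)
      have hkl : k ∉ l := fun h => hk (List.mem_cons_of_mem _ h)
      have e : ∀ (c : ℝ) (u : ℝ),
          Function.update (Function.update x k u) j c
            = Function.update (Function.update x j c) k u :=
        fun c u => (Function.update_comm hjk c u x).symm
      have hb := ih hkl (Function.update x j (b' j)) (by rw [← e]; exact (hupd _ hmem j).2)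
      have ha := ih hkl (Function.update x j (a' j)) (by rw [← e]; exact (hupd _ hmem j).1)
      have := hb.sub ha
      simp only [altSum, e]
      exact this

lemma continuous_itInt {n : ℕ} (a' b' : Fin n → ℝ) {g : (Fin n → ℝ) → ℝ} (hg : Continuous g) :
    ∀ l : List (Fin n), Continuous (itInt a' b' l g)
  | [] => hg
  | i :: l => by
      have hc : Continuous fun p : (Fin n → ℝ) × ℝ =>
          itInt a' b' l g (Function.update p.1 i p.2) :=
        (continuous_itInt a' b' hg l).comp (continuous_fst.update i continuous_snd)
      have := intervalIntegral.continuous_parametric_intervalIntegral_of_continuous'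
        (μ := volume) (f := fun (x : Fin n → ℝ) (t : ℝ) => itInt a' b' l g (Function.update x i t))
        hc (a' i) (b' i)
      simpa [itInt] using this

lemma update_mem_Icc {n : ℕ} {a' b' x : Fin n → ℝ} (hx : x ∈ Set.Icc a' b') (i : Fin n) {c : ℝ}
    (hc : c ∈ Set.Icc (a' i) (b' i)) : Function.update x i c ∈ Set.Icc a' b' := by
  constructor <;> intro j <;> by_cases h : j = i
  · subst h; simpa using hc.1
  · simpa [Function.update_of_ne h] using hx.1 j
  · subst h; simpa using hc.2
  · simpa [Function.update_of_ne h] using hx.2 j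

lemma key_lemma {n : ℕ} (a b a' b' : Fin n → ℝ) (ha' : ∀ j, a j < a' j) (hb' : ∀ j, b' j < b j)
    (hab' : ∀ j, a' j ≤ b' j) (g F : (Fin n → ℝ) → ℝ) (hg : Continuous g)
    (hdiff : MixedDiffOn (List.finRange n) F (Set.pi Set.univ fun j => Set.Ioo (a j) (b j)))
    (hpde : ∀ x ∈ Set.pi Set.univ fun j => Set.Ioo (a j) (b j),
      mixedD (List.finRange n) F x = g x) :
    ∀ k, k ≤ n → ∀ x ∈ Set.Icc a' b',
      altSum a' b' ((List.finRange n).take k) (mixedD ((List.finRange n).drop k) F) x =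
        itInt a' b' (((List.finRange n).take k).reverse) g x := by
  have hsub : Set.Icc a' b' ⊆ Set.pi Set.univ fun j => Set.Ioo (a j) (b j) := by
    intro y hy j _
    exact ⟨lt_of_lt_of_le (ha' j) (hy.1 j), lt_of_le_of_lt (hy.2 j) (hb' j)⟩
  have hupd : ∀ y ∈ Set.Icc a' b', ∀ i : Fin n,
      Function.update y i (a' i) ∈ Set.Icc a' b' ∧ Function.update y i (b' i) ∈ Set.Icc a' b' :=
    fun y hy i => ⟨update_mem_Icc hy i ⟨le_refl _, hab' i⟩,
      update_mem_Icc hy i ⟨hab' i, le_refl _⟩⟩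
  intro k
  induction k with
  | zero =>
      intro _ x hx
      simp only [List.take_zero, List.drop_zero, List.reverse_nil]
      show mixedD (List.finRange n) F x = g x
      exact hpde x (hsub hx)
  | succ k ih =>
      intro hk1 x hx
      have hk : k < n := hk1
      have hklen : k < (List.finRange n).length := by simpa [List.length_finRange] using hk
      set i : Fin n := ⟨k, hk⟩ with hi
      have hgetElem : (List.finRange n)[k] = i := by simp [List.getElem_finRange, hi]
      have htake : (List.finRange n).take (k+1) = (List.finRange n).take k ++ [i] := by
        rw [List.take_succ, List.getElem?_eq_getElem hklen, hgetElem]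
        rfl
      have hdrop : (List.finRange n).drop k = i :: (List.finRange n).drop (k+1) := by
        rw [List.drop_eq_getElem_cons hklen, hgetElem]
      have hnotmem : i ∉ (List.finRange n).take k := by
        have hnd : ((List.finRange n).take k ++ (List.finRange n).drop k).Nodup := by
          rw [List.take_append_drop]; exact List.nodup_finRange n
        have hdisj := (List.nodup_append.mp hnd).2.2
        intro hmem
        exact hdisj i hmem i (by rw [hdrop]; exact List.mem_cons_self) rfl
      set G := mixedD ((List.finRange n).drop (k+1)) F with hG
      have hpdG : pd i G = mixedD ((List.finRange n).drop k) F := by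
        rw [hdrop]; rfl
      have hpdat : ∀ y ∈ Set.Icc a' b', PdAt i G y := by
        intro y hy
        have h1 := mixedDiffOn_drop hdiff k
        rw [hdrop] at h1
        exact h1.2 y (hsub hy)
      have hFTC : (∫ t in (a' i)..(b' i),
            itInt a' b' (((List.finRange n).take k).reverse) g (Function.update x i t))
          = altSum a' b' ((List.finRange n).take k) G (Function.update x i (b' i))
            - altSum a' b' ((List.finRange n).take k) G (Function.update x i (a' i)) := by
        apply intervalIntegral.integral_eq_sub_of_hasDerivAt
          (f := fun u => altSum a' b' ((List.finRange n).take k) G (Function.update x i u))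
        · intro t ht
          rw [Set.uIcc_of_le (hab' i)] at ht
          have hmem : Function.update x i t ∈ Set.Icc a' b' := update_mem_Icc hx i ht
          have hd := hasDerivAt_altSum a' b' hpdat hupd ((List.finRange n).take k)
            hnotmem x t hmem
          have heq : altSum a' b' ((List.finRange n).take k) (pd i G) (Function.update x i t)
              = itInt a' b' (((List.finRange n).take k).reverse) g (Function.update x i t) := by
            rw [hpdG]
            exact ih (le_of_lt hk) _ hmem
          rwa [heq] at hd
        · apply Continuous.intervalIntegrable
          exact (continuous_itInt a' b' hg _).comp (continuous_const.update i continuous_id)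
      rw [htake, altSum_append_singleton, altSum_comp_update a' b' _ _ hnotmem,
        altSum_comp_update a' b' _ _ hnotmem, ← hFTC]
      rw [List.reverse_append, List.reverse_singleton]
      rfl

lemma altSum_eq_sum {n : ℕ} (a' b' : Fin n → ℝ) (F : (Fin n → ℝ) → ℝ) :
    ∀ (l : List (Fin n)), l.Nodup → ∀ x : Fin n → ℝ,
      altSum a' b' l F x = ∑ s : Fin n → Bool,
        if ∀ j, s j = false → j ∈ l then
          (-1 : ℝ) ^ (Finset.univ.filter fun j => s j = false).card *
            F (fun j => if j ∈ l then (if s j then b' j else a' j) else x j)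
        else 0 := by
  intro l
  induction l with
  | nil =>
      intro _ x
      rw [Finset.sum_eq_single (fun _ => true)]
      · simp [altSum]
      · intro s _ hs
        rw [if_neg]
        intro hcond
        apply hs; funext j
        cases hsj : s j with
        | false => exact absurd (hcond j hsj) List.not_mem_nil
        | true => rfl
      · simp
  | cons i l ih =>
      intro hnd x
      have hil : i ∉ l := (List.nodup_cons.mp hnd).1
      have hndl := (List.nodup_cons.mp hnd).2
      simp only [altSum]
      have hsplit : (∑ s : Fin n → Bool,
            if ∀ j, s j = false → j ∈ i :: l then
              (-1 : ℝ) ^ (Finset.univ.filter fun j => s j = false).card *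
                F (fun j => if j ∈ i :: l then (if s j then b' j else a' j) else x j)
            else 0)
          = (∑ s ∈ Finset.univ.filter (fun s : Fin n → Bool => s i = true),
            if ∀ j, s j = false → j ∈ i :: l then
              (-1 : ℝ) ^ (Finset.univ.filter fun j => s j = false).card *
                F (fun j => if j ∈ i :: l then (if s j then b' j else a' j) else x j)
            else 0)
            + ∑ s ∈ Finset.univ.filter (fun s : Fin n → Bool => ¬ s i = true),
            if ∀ j, s j = false → j ∈ i :: l then
              (-1 : ℝ) ^ (Finset.univ.filter fun j => s j = false).card *
                F (fun j => if j ∈ i :: l then (if s j then b' j else a' j) else x j)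
            else 0 :=
        (Finset.sum_filter_add_sum_filter_not Finset.univ _ _).symm
      rw [ih hndl, ih hndl, hsplit]
      have e1 : ∀ c : ℝ, (∑ s ∈ Finset.univ.filter (fun s : Fin n → Bool => s i = true),
            (if ∀ j, s j = false → j ∈ l then
              (-1 : ℝ) ^ (Finset.univ.filter fun j => s j = false).card *
                F (fun j => if j ∈ l then (if s j then b' j else a' j)
                  else Function.update x i c j)
            else 0))
          = ∑ s : Fin n → Bool,
            (if ∀ j, s j = false → j ∈ l then
              (-1 : ℝ) ^ (Finset.univ.filter fun j => s j = false).card *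
                F (fun j => if j ∈ l then (if s j then b' j else a' j)
                  else Function.update x i c j)
            else 0) := by
        intro c
        apply Finset.sum_subset (Finset.filter_subset _ _)
        intro s _ hs
        simp only [Finset.mem_filter, Finset.mem_univ, true_and] at hs
        rw [if_neg]
        intro hcond
        exact hil (hcond i (by simpa using hs))
      have e2 : ∑ s ∈ Finset.univ.filter (fun s : Fin n → Bool => s i = true),
          (if ∀ j, s j = false → j ∈ i :: l then
            (-1 : ℝ) ^ (Finset.univ.filter fun j => s j = false).card *
              F (fun j => if j ∈ i :: l then (if s j then b' j else a' j) else x j)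
          else 0)
          = ∑ s ∈ Finset.univ.filter (fun s : Fin n → Bool => s i = true),
          (if ∀ j, s j = false → j ∈ l then
            (-1 : ℝ) ^ (Finset.univ.filter fun j => s j = false).card *
              F (fun j => if j ∈ l then (if s j then b' j else a' j)
                else Function.update x i (b' i) j)
          else 0) := by
        apply Finset.sum_congr rfl
        intro s hs
        simp only [Finset.mem_filter, Finset.mem_univ, true_and] at hs
        by_cases hcond : ∀ j, s j = false → j ∈ l
        · rw [if_pos (fun j hj => List.mem_cons_of_mem _ (hcond j hj)), if_pos hcond]
          congr 1
          congr 1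
          funext j
          by_cases hji : j = i
          · subst hji
            simp [hil, hs]
          · simp [List.mem_cons, hji, Function.update_of_ne hji]
        · rw [if_neg, if_neg hcond]
          intro hcond'
          apply hcond
          intro j hj
          rcases List.mem_cons.mp (hcond' j hj) with h | h
          · rw [h] at hj; rw [hs] at hj; exact absurd hj (by simp)
          · exact h
      have e3 : ∑ s ∈ Finset.univ.filter (fun s : Fin n → Bool => ¬ s i = true),
          (if ∀ j, s j = false → j ∈ i :: l then
            (-1 : ℝ) ^ (Finset.univ.filter fun j => s j = false).card *
              F (fun j => if j ∈ i :: l then (if s j then b' j else a' j) else x j)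
          else 0)
          = ∑ s ∈ Finset.univ.filter (fun s : Fin n → Bool => s i = true),
          (-(if ∀ j, s j = false → j ∈ l then
            (-1 : ℝ) ^ (Finset.univ.filter fun j => s j = false).card *
              F (fun j => if j ∈ l then (if s j then b' j else a' j)
                else Function.update x i (a' i) j)
          else 0)) := by
        apply Finset.sum_nbij' (fun s => Function.update s i true)
          (fun s => Function.update s i false)
        · intro s hs
          simp [Finset.mem_filter]
        · intro s hs
          simp [Finset.mem_filter]
        · intro s hs
          simp only [Finset.mem_filter, Finset.mem_univ, true_and, Bool.not_eq_true] at hs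
          rw [Function.update_idem, ← hs, Function.update_eq_self]
        · intro s hs
          simp only [Finset.mem_filter, Finset.mem_univ, true_and] at hs
          rw [Function.update_idem, ← hs, Function.update_eq_self]
        · intro s hs
          simp only [Finset.mem_filter, Finset.mem_univ, true_and, Bool.not_eq_true] at hs
          by_cases hcond : ∀ j, Function.update s i true j = false → j ∈ l
          · have hcond2 : ∀ j, s j = false → j ∈ i :: l := by
              intro j hj
              by_cases hji : j = i
              · subst hji; exact List.mem_cons_self
              · exact List.mem_cons_of_mem _
                  (hcond j (by rwa [Function.update_of_ne hji]))
            rw [if_pos hcond2, if_pos hcond]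
            have hcard : (Finset.univ.filter fun j => s j = false)
                = insert i (Finset.univ.filter fun j => Function.update s i true j = false) := by
              ext j
              by_cases hji : j = i
              · subst hji; simp [hs]
              · simp [hji, Function.update_of_ne hji]
            have hinot : i ∉ (Finset.univ.filter fun j => Function.update s i true j = false) := by
              simp
            have hpt : (fun j => if j ∈ i :: l then (if s j then b' j else a' j) else x j)
                = fun j => if j ∈ l then (if Function.update s i true j then b' j else a' j)
                  else Function.update x i (a' i) j := by
              funext j
              by_cases hji : j = i
              · subst hji
                simp [hil, hs]
              · simp [List.mem_cons, hji, Function.update_of_ne hji]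
            rw [hcard, Finset.card_insert_of_notMem hinot, hpt, pow_succ]
            ring
          · rw [if_neg, if_neg hcond, neg_zero]
            intro hcond'
            apply hcond
            intro j hj
            have hji : j ≠ i := by
              intro h; subst h
              simp at hj
            rw [Function.update_of_ne hji] at hj
            rcases List.mem_cons.mp (hcond' j hj) with h | h
            · exact absurd h hji
            · exact h
      rw [e2, e3, e1 (b' i), Finset.sum_neg_distrib, e1 (a' i)]
      ring

/-- The alternating vertex sum. -/
noncomputable def vertexSum {n : ℕ} (c d : Fin n → ℝ) (H : (Fin n → ℝ) → ℝ) : ℝ :=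
  ∑ s : Fin n → Bool,
    (-1 : ℝ) ^ (Finset.univ.filter fun j => s j = false).card *
      H (fun j => if s j then d j else c j)

lemma vertexSum_eq_altSum {n : ℕ} (c d : Fin n → ℝ) (H : (Fin n → ℝ) → ℝ) (x : Fin n → ℝ) :
    vertexSum c d H = altSum c d (List.finRange n) H x := by
  rw [vertexSum, altSum_eq_sum c d H _ (List.nodup_finRange n) x]
  apply Finset.sum_congr rfl
  intro s _
  rw [if_pos (fun j _ => List.mem_finRange j)]
  congr 1
  congr 1
  funext j
  rw [if_pos (List.mem_finRange j)]

/-- Let `I = ∏_{j=1}^n [a_j,b_j]` with `a_j < b_j`, let `f : I → ℝ` be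
continuous, and let `F, F̃ : I → ℝ` both be continuous functions whose mixed partial
derivatives `∂_1 ⋯ ∂_n F` and `∂_1 ⋯ ∂_n F̃` exist on the interior `I̊` and both equal `f`
there. Then the combinatorial formula gives the same value for both:
`∑_{s} (−1)^{#_0(s)} F(P_s) = ∑_{s} (−1)^{#_0(s)} F̃(P_s)`. -/
theorem alternating_vertex_sum_welldefined_for_antiderivatives (n : ℕ) (a b : Fin n → ℝ)
    (hab : ∀ j, a j < b j) (f F F' : (Fin n → ℝ) → ℝ)
    (hf : ContinuousOn f (Set.Icc a b))
    (hF : ContinuousOn F (Set.Icc a b))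
    (hF' : ContinuousOn F' (Set.Icc a b))
    (hdiffF : MixedDiffOn (List.finRange n) F (Set.pi Set.univ fun j => Set.Ioo (a j) (b j)))
    (hdiffF' : MixedDiffOn (List.finRange n) F' (Set.pi Set.univ fun j => Set.Ioo (a j) (b j)))
    (hpdeF : ∀ x ∈ Set.pi Set.univ fun j => Set.Ioo (a j) (b j),
      mixedD (List.finRange n) F x = f x)
    (hpdeF' : ∀ x ∈ Set.pi Set.univ fun j => Set.Ioo (a j) (b j),
      mixedD (List.finRange n) F' x = f x) :
    ∑ s : Fin n → Bool,
        (-1 : ℝ) ^ (Finset.univ.filter fun j => s j = false).card *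
          F (fun j => if s j then b j else a j) =
      ∑ s : Fin n → Bool,
        (-1 : ℝ) ^ (Finset.univ.filter fun j => s j = false).card *
          F' (fun j => if s j then b j else a j) := by
  classical
  -- the continuous extension `g` of `f` to all of `ℝⁿ`
  set clamp : (Fin n → ℝ) → (Fin n → ℝ) := fun x j => max (a j) (min (b j) (x j)) with hclamp
  have hclampc : Continuous clamp :=
    continuous_pi fun j => continuous_const.max (continuous_const.min (continuous_apply j))
  have hclampmem : ∀ x, clamp x ∈ Set.Icc a b := by
    intro x
    constructor <;> intro j
    · exact le_max_left _ _
    · exact max_le (hab j).le (min_le_left _ _)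
  have hclampid : ∀ x ∈ Set.Icc a b, clamp x = x := by
    intro x hx
    funext j
    show max (a j) (min (b j) (x j)) = x j
    rw [min_eq_right (hx.2 j), max_eq_right (hx.1 j)]
  set g : (Fin n → ℝ) → ℝ := fun x => f (clamp x) with hgdef
  have hgc : Continuous g := hf.comp_continuous hclampc hclampmem
  have hgeq : ∀ x ∈ Set.Icc a b, g x = f x := by
    intro x hx
    show f (clamp x) = f x
    rw [hclampid x hx]
  have hIoosub : (Set.pi Set.univ fun j => Set.Ioo (a j) (b j)) ⊆ Set.Icc a b := by
    intro y hy
    constructor <;> intro j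
    · exact (hy j (Set.mem_univ j)).1.le
    · exact (hy j (Set.mem_univ j)).2.le
  -- the shrunk endpoints
  set A : ℝ → Fin n → ℝ := fun ε j => a j + ε * (b j - a j) with hA
  set B : ℝ → Fin n → ℝ := fun ε j => b j - ε * (b j - a j) with hB
  -- the shrunk vertex sums agree
  have main : ∀ ε ∈ Set.Ioo (0:ℝ) (1/2),
      vertexSum (A ε) (B ε) F = vertexSum (A ε) (B ε) F' := by
    intro ε hε
    have ha' : ∀ j, a j < A ε j := by
      intro j
      have := hab j
      have := hε.1
      show a j < a j + ε * (b j - a j)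
      nlinarith
    have hb' : ∀ j, B ε j < b j := by
      intro j
      have := hab j
      have := hε.1
      show b j - ε * (b j - a j) < b j
      nlinarith
    have hab' : ∀ j, A ε j ≤ B ε j := by
      intro j
      have h1 := hab j
      have h2 := hε.1
      have h3 := hε.2
      show a j + ε * (b j - a j) ≤ b j - ε * (b j - a j)
      nlinarith
    have hAIcc : A ε ∈ Set.Icc (A ε) (B ε) := ⟨le_refl _, fun j => hab' j⟩
    have htake : (List.finRange n).take n = List.finRange n :=
      List.take_of_length_le (le_of_eq List.length_finRange)
    have hdrop : (List.finRange n).drop n = [] := by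
      apply List.drop_eq_nil_of_le
      exact le_of_eq List.length_finRange
    have hk1 := key_lemma a b (A ε) (B ε) ha' hb' hab' g F hgc hdiffF
      (fun x hx => (hpdeF x hx).trans (hgeq x (hIoosub hx)).symm) n le_rfl (A ε) hAIcc
    have hk2 := key_lemma a b (A ε) (B ε) ha' hb' hab' g F' hgc hdiffF'
      (fun x hx => (hpdeF' x hx).trans (hgeq x (hIoosub hx)).symm) n le_rfl (A ε) hAIcc
    rw [htake, hdrop] at hk1 hk2
    have hmix : mixedD ([] : List (Fin n)) F = F := rfl
    have hmix' : mixedD ([] : List (Fin n)) F' = F' := rfl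
    rw [hmix] at hk1
    rw [hmix'] at hk2
    rw [vertexSum_eq_altSum (A ε) (B ε) F (A ε), vertexSum_eq_altSum (A ε) (B ε) F' (A ε),
      hk1, hk2]
  -- pass to the limit ε → 0⁺
  have tend : ∀ H : (Fin n → ℝ) → ℝ, ContinuousOn H (Set.Icc a b) →
      Filter.Tendsto (fun ε => vertexSum (A ε) (B ε) H) (nhdsWithin 0 (Set.Ioi (0:ℝ)))
        (nhds (vertexSum a b H)) := by
    intro H hH
    unfold vertexSum
    apply tendsto_finset_sum
    intro s _
    apply Filter.Tendsto.const_mul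
    have hvmem : (fun j => if s j then b j else a j) ∈ Set.Icc a b := by
      constructor <;> intro j <;> by_cases hs : s j <;> simp [hs, (hab j).le]
    have hv : Filter.Tendsto (fun ε => (fun j => if s j then B ε j else A ε j))
        (nhdsWithin 0 (Set.Ioi (0:ℝ))) (nhds (fun j => if s j then b j else a j)) := by
      rw [tendsto_pi_nhds]
      intro j
      by_cases hs : s j
      · simp only [hs, if_true]
        have : Filter.Tendsto (fun ε : ℝ => b j - ε * (b j - a j)) (nhds 0)
            (nhds (b j - 0 * (b j - a j))) := by
          exact Filter.Tendsto.sub tendsto_const_nhds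
            (Filter.Tendsto.mul Filter.tendsto_id tendsto_const_nhds)
        simp only [zero_mul, sub_zero] at this
        exact this.mono_left nhdsWithin_le_nhds
      · simp only [hs, if_false]
        have : Filter.Tendsto (fun ε : ℝ => a j + ε * (b j - a j)) (nhds 0)
            (nhds (a j + 0 * (b j - a j))) := by
          exact Filter.Tendsto.add tendsto_const_nhds
            (Filter.Tendsto.mul Filter.tendsto_id tendsto_const_nhds)
        simp only [zero_mul, add_zero] at this
        exact this.mono_left nhdsWithin_le_nhds
    have hmemv : ∀ᶠ ε in nhdsWithin 0 (Set.Ioi (0:ℝ)),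
        (fun j => if s j then B ε j else A ε j) ∈ Set.Icc a b := by
      filter_upwards [Ioo_mem_nhdsGT_of_mem
        (by constructor <;> norm_num : (0:ℝ) ∈ Set.Ico (0:ℝ) (1/2))] with ε hε
      constructor <;> intro j <;> by_cases hs : s j <;>
        simp only [hs, if_true, if_false]
      · show a j ≤ b j - ε * (b j - a j)
        have := hab j; have := hε.1; have := hε.2; nlinarith
      · show a j ≤ a j + ε * (b j - a j)
        have := hab j; have := hε.1; nlinarith
      · show b j - ε * (b j - a j) ≤ b j
        have := hab j; have := hε.1; nlinarith
      · show a j + ε * (b j - a j) ≤ b j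
        have := hab j; have := hε.1; have := hε.2; nlinarith
    have hHc := (hH _ hvmem).tendsto
    exact hHc.comp (tendsto_nhdsWithin_iff.mpr ⟨hv, hmemv⟩)
  have t1 := tend F hF
  have t2 := tend F' hF'
  have hcong : (fun ε => vertexSum (A ε) (B ε) F)
      =ᶠ[nhdsWithin 0 (Set.Ioi (0:ℝ))] (fun ε => vertexSum (A ε) (B ε) F') := by
    filter_upwards [Ioo_mem_nhdsGT_of_mem
      (by constructor <;> norm_num : (0:ℝ) ∈ Set.Ico (0:ℝ) (1/2))] with ε hε
    exact main ε hε
  have t1' := t1.congr' hcong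
  exact tendsto_nhds_unique t1' t2
end

section
/- Let T : ℝ^n → ℝ^n be an invertible linear map, let I = [0,1]^n be the unit hypercube, and let U = T(I) be the corresponding parallelotope. Let f be continuous on U, and let F : I → ℝ be an antiderivative of the function x ↦ f(T x) · |det T| on I, i.e. F is continuous on I and its mixed partial derivative ∂_1 ⋯ ∂_n F exists on the open unit cube (0,1)^n and equals f(T x) · |det T| there. Then ∫_U f(y_1,…,y_n) dy_1⋯dy_n = ∑_{s ∈ {0,1}^n} (−1)^{#_0(s)} F(s), where each binary string s ∈ {0,1}^n is regarded as a vertex of the unit cube (so that T s runs over the vertices of U) and #_0(s) is the number of zeros in s. -/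
open MeasureTheory

namespace Aux
variable {n : ℕ}

def S (n : ℕ) : Set (Fin n → ℝ) := Set.pi Set.univ fun _ => Set.Ioo (0 : ℝ) 1

lemma isOpen_S : IsOpen (S n) := isOpen_set_pi Set.finite_univ fun _ _ => isOpen_Ioo

lemma S_subset_Icc : S n ⊆ Set.Icc 0 1 := by
  intro x hx
  constructor <;> intro j <;> have := hx j (Set.mem_univ j)
  · exact le_of_lt this.1
  · exact le_of_lt this.2

lemma mem_S_update {x : Fin n → ℝ} (hx : x ∈ S n) {i : Fin n} {c : ℝ}
    (hc : c ∈ Set.Ioo (0:ℝ) 1) : Function.update x i c ∈ S n := by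
  intro j _
  rcases eq_or_ne j i with rfl | hj
  · simpa using hc
  · simpa [Function.update_of_ne hj] using hx j (Set.mem_univ j)

lemma mixedD_update {l : List (Fin n)} {i : Fin n} (hi : i ∉ l)
    (G : (Fin n → ℝ) → ℝ) (c : ℝ) (x : Fin n → ℝ) :
    mixedD l (fun y => G (Function.update y i c)) x = mixedD l G (Function.update x i c) := by
  induction l generalizing x with
  | nil => rfl
  | cons j l ih =>
    have hij : j ≠ i := fun h => hi (h ▸ (List.mem_cons_self (a := j) (l := l)))
    have hi' : i ∉ l := fun h => hi (List.mem_cons_of_mem _ h)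
    show deriv (fun t => mixedD l (fun y => G (Function.update y i c)) (Function.update x j t)) (x j)
        = deriv (fun t => mixedD l G (Function.update (Function.update x i c) j t))
            ((Function.update x i c) j)
    rw [Function.update_of_ne hij]
    congr 1
    funext t
    rw [ih hi', Function.update_comm hij]

lemma MixedDiffOn_update {l : List (Fin n)} {i : Fin n} (hi : i ∉ l)
    {G : (Fin n → ℝ) → ℝ} (hG : MixedDiffOn l G (S n)) {c : ℝ} (hc : c ∈ Set.Ioo (0:ℝ) 1) :
    MixedDiffOn l (fun y => G (Function.update y i c)) (S n) := by
  induction l with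
  | nil => trivial
  | cons j l ih =>
    have hij : j ≠ i := fun h => hi (h ▸ (List.mem_cons_self (a := j) (l := l)))
    have hi' : i ∉ l := fun h => hi (List.mem_cons_of_mem _ h)
    refine ⟨ih hi' hG.1, fun x hx => ?_⟩
    have key : (fun t : ℝ => mixedD l (fun y => G (Function.update y i c)) (Function.update x j t))
        = fun t : ℝ => mixedD l G (Function.update (Function.update x i c) j t) := by
      funext t
      rw [mixedD_update hi', Function.update_comm hij]
    unfold PdAt
    rw [key, ← Function.update_of_ne hij c x]
    exact hG.2 _ (mem_S_update hx hc)

lemma mixedD_sub {U : Set (Fin n → ℝ)} (hU : IsOpen U) (l : List (Fin n))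
    (P Q : (Fin n → ℝ) → ℝ) (hP : MixedDiffOn l P U) (hQ : MixedDiffOn l Q U) :
    MixedDiffOn l (fun x => P x - Q x) U ∧
      ∀ x ∈ U, mixedD l (fun x => P x - Q x) x = mixedD l P x - mixedD l Q x := by
  induction l with
  | nil => exact ⟨trivial, fun x _ => rfl⟩
  | cons i l ih =>
    obtain ⟨ihD, ihE⟩ := ih hP.1 hQ.1
    have hev : ∀ x ∈ U,
        (fun t : ℝ => mixedD l (fun y => P y - Q y) (Function.update x i t))
          =ᶠ[nhds (x i)]
        fun t : ℝ => mixedD l P (Function.update x i t) - mixedD l Q (Function.update x i t) := by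
      intro x hx
      have hc : Continuous (fun t : ℝ => Function.update x i t) :=
        continuous_const.update i continuous_id
      have hmem : ∀ᶠ t : ℝ in nhds (x i), Function.update x i t ∈ U := by
        have := hc.continuousAt (x := x i) |>.preimage_mem_nhds
          (by rw [Function.update_eq_self]; exact hU.mem_nhds hx)
        exact this
      filter_upwards [hmem] with t ht
      exact ihE _ ht
    constructor
    · refine ⟨ihD, fun x hx => ?_⟩
      unfold PdAt
      rw [(hev x hx).differentiableAt_iff]
      exact (hP.2 x hx).sub (hQ.2 x hx)
    · intro x hx
      show deriv _ _ = _
      rw [(hev x hx).deriv_eq]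
      exact deriv_sub (hP.2 x hx) (hQ.2 x hx)

def difAt (i : Fin n) (c d : ℝ) (G : (Fin n → ℝ) → ℝ) : (Fin n → ℝ) → ℝ :=
  fun y => G (Function.update y i d) - G (Function.update y i c)

lemma MixedDiffOn_difAt {l : List (Fin n)} {i : Fin n} (hi : i ∉ l)
    {G : (Fin n → ℝ) → ℝ} (hG : MixedDiffOn l G (S n)) {c d : ℝ}
    (hc : c ∈ Set.Ioo (0:ℝ) 1) (hd : d ∈ Set.Ioo (0:ℝ) 1) :
    MixedDiffOn l (difAt i c d G) (S n) :=
  (mixedD_sub isOpen_S l _ _ (MixedDiffOn_update hi hG hd) (MixedDiffOn_update hi hG hc)).1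

lemma mixedD_difAt {l : List (Fin n)} {i : Fin n} (hi : i ∉ l)
    {G : (Fin n → ℝ) → ℝ} (hG : MixedDiffOn l G (S n)) {c d : ℝ}
    (hc : c ∈ Set.Ioo (0:ℝ) 1) (hd : d ∈ Set.Ioo (0:ℝ) 1) {x : Fin n → ℝ} (hx : x ∈ S n) :
    mixedD l (difAt i c d G) x
      = mixedD l G (Function.update x i d) - mixedD l G (Function.update x i c) := by
  have := (mixedD_sub isOpen_S l _ _ (MixedDiffOn_update hi hG hd)
    (MixedDiffOn_update hi hG hc)).2 x hx
  rw [show difAt i c d G = fun y => G (Function.update y i d) - G (Function.update y i c) from rfl]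
  rw [this, mixedD_update hi, mixedD_update hi]


def Dif (a b : Fin n → ℝ) : List (Fin n) → ((Fin n → ℝ) → ℝ) → (Fin n → ℝ) → ℝ
  | [], G => G
  | i :: l, G => Dif a b l (difAt i (a i) (b i) G)

lemma mvt {a b : Fin n → ℝ} (ha : ∀ j, 0 < a j) (hb : ∀ j, b j < 1) (hab : ∀ j, a j ≤ b j)
    (l : List (Fin n)) (hl : l.Nodup) (G : (Fin n → ℝ) → ℝ)
    (hG : MixedDiffOn l G (S n)) (x : Fin n → ℝ) (hx : x ∈ S n) :
    ∃ ξ ∈ S n, Dif a b l G x = (l.map fun j => b j - a j).prod * mixedD l G ξ := by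
  induction l generalizing G with
  | nil => exact ⟨x, hx, by simp [Dif, mixedD]⟩
  | cons i l ih =>
    have hi : i ∉ l := (List.nodup_cons.1 hl).1
    have hl' : l.Nodup := (List.nodup_cons.1 hl).2
    have hai : a i ∈ Set.Ioo (0:ℝ) 1 := ⟨ha i, lt_of_le_of_lt (hab i) (hb i)⟩
    have hbi : b i ∈ Set.Ioo (0:ℝ) 1 := ⟨lt_of_lt_of_le (ha i) (hab i), hb i⟩
    obtain ⟨ξ, hξ, heq⟩ := ih hl' (difAt i (a i) (b i) G) (MixedDiffOn_difAt hi hG.1 hai hbi)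
    have hdif : mixedD l (difAt i (a i) (b i) G) ξ
        = mixedD l G (Function.update ξ i (b i)) - mixedD l G (Function.update ξ i (a i)) :=
      mixedD_difAt hi hG.1 hai hbi hξ
    set φ : ℝ → ℝ := fun t => mixedD l G (Function.update ξ i t) with hφ
    have hmemICC : ∀ t ∈ Set.Icc (a i) (b i), Function.update ξ i t ∈ S n := fun t ht =>
      mem_S_update hξ ⟨lt_of_lt_of_le (ha i) ht.1, lt_of_le_of_lt ht.2 (hb i)⟩
    have hdφ : ∀ t ∈ Set.Icc (a i) (b i), DifferentiableAt ℝ φ t := by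
      intro t ht
      have := hG.2 _ (hmemICC t ht)
      unfold PdAt at this
      simpa [hφ, Function.update_idem] using this
    have hderiv : ∀ t ∈ Set.Icc (a i) (b i),
        deriv φ t = mixedD (i :: l) G (Function.update ξ i t) := by
      intro t ht
      show _ = pd i (mixedD l G) (Function.update ξ i t)
      unfold pd
      simp [hφ, Function.update_idem]
    rcases eq_or_lt_of_le (hab i) with hEq | hLt
    · refine ⟨Function.update ξ i (a i), hmemICC _ ⟨le_refl _, hab i⟩, ?_⟩
      show Dif a b l (difAt i (a i) (b i) G) x = _
      rw [heq, hdif, List.map_cons, List.prod_cons, ← hEq]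
      ring
    · obtain ⟨c, hc, hslope⟩ := exists_deriv_eq_slope φ hLt
        (fun t ht => (hdφ t ht).continuousAt.continuousWithinAt)
        (fun t ht => (hdφ t (Set.mem_Icc_of_Ioo ht)).differentiableWithinAt)
      refine ⟨Function.update ξ i c, hmemICC c (Set.mem_Icc_of_Ioo hc), ?_⟩
      show Dif a b l (difAt i (a i) (b i) G) x = _
      rw [heq, hdif]
      have : φ (b i) - φ (a i) = (b i - a i) * mixedD (i :: l) G (Function.update ξ i c) := by
        have hne : b i - a i ≠ 0 := sub_ne_zero.2 hLt.ne'
        rw [← hderiv c (Set.mem_Icc_of_Ioo hc), hslope]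
        rw [mul_comm]
        exact (div_mul_cancel₀ _ hne).symm
      rw [show mixedD l G (Function.update ξ i (b i)) - mixedD l G (Function.update ξ i (a i))
          = φ (b i) - φ (a i) from rfl, this, List.map_cons, List.prod_cons]
      ring

lemma Dif_eq_sum (a b : Fin n → ℝ) (l : List (Fin n)) (hl : l.Nodup)
    (G : (Fin n → ℝ) → ℝ) (x : Fin n → ℝ) :
    Dif a b l G x = ∑ σ ∈ l.toFinset.powerset, (-1 : ℝ) ^ (l.length - σ.card) *
      G (fun j => if j ∈ l.toFinset then (if j ∈ σ then b j else a j) else x j) := by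
  induction l generalizing G with
  | nil => simp [Dif]
  | cons i l ih =>
    have hi : i ∉ l := (List.nodup_cons.1 hl).1
    have hi' : i ∉ l.toFinset := by simpa using hi
    have hl' : l.Nodup := (List.nodup_cons.1 hl).2
    show Dif a b l (difAt i (a i) (b i) G) x = _
    rw [ih hl']
    rw [show (i :: l).toFinset = insert i l.toFinset from List.toFinset_cons]
    rw [Finset.sum_powerset_insert hi']
    have hcard : ∀ σ ∈ l.toFinset.powerset, σ.card ≤ l.length := by
      intro σ hσ
      exact le_trans (Finset.card_le_card (Finset.mem_powerset.1 hσ)) (List.toFinset_card_le l)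
    rw [← Finset.sum_add_distrib]
    apply Finset.sum_congr rfl
    intro σ hσ
    have hσs : σ ⊆ l.toFinset := Finset.mem_powerset.1 hσ
    have hiσ : i ∉ σ := fun h => hi' (hσs h)
    have hlen : (i :: l).length - σ.card = (l.length - σ.card) + 1 := by
      have := hcard σ hσ
      simp only [List.length_cons]
      omega
    have hlen2 : (i :: l).length - (insert i σ).card = l.length - σ.card := by
      rw [Finset.card_insert_of_notMem hiσ]
      simp only [List.length_cons]
      omega
    have hptb : (fun j => if j ∈ insert i l.toFinset then
          (if j ∈ insert i σ then b j else a j) else x j)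
        = Function.update (fun j => if j ∈ l.toFinset then (if j ∈ σ then b j else a j) else x j)
            i (b i) := by
      funext j
      rcases eq_or_ne j i with rfl | hj
      · simp
      · simp [Function.update_of_ne hj, hj]
    have hpta : (fun j => if j ∈ insert i l.toFinset then (if j ∈ σ then b j else a j) else x j)
        = Function.update (fun j => if j ∈ l.toFinset then (if j ∈ σ then b j else a j) else x j)
            i (a i) := by
      funext j
      rcases eq_or_ne j i with rfl | hj
      · simp [hiσ]
      · simp [Function.update_of_ne hj, hj]
    rw [hlen, hlen2, hptb, hpta]
    show (-1:ℝ) ^ (l.length - σ.card) * (G _ - G _) = _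
    rw [pow_succ]
    ring


noncomputable def K : List (Fin n) → ((Fin n → ℝ) → ℝ) → (Fin n → ℝ) → ℝ
  | [], G => G
  | i :: l, G => fun x => ∫ t in (0:ℝ)..(x i), K l G (Function.update x i t)

lemma K_continuous {G : (Fin n → ℝ) → ℝ} (hG : Continuous G) (l : List (Fin n)) :
    Continuous (K l G) := by
  induction l with
  | nil => exact hG
  | cons i l ih =>
    show Continuous fun x => ∫ t in (0:ℝ)..(x i), K l G (Function.update x i t)
    apply intervalIntegral.continuous_parametric_intervalIntegral_of_continuous
      (f := fun x t => K l G (Function.update x i t)) (μ := volume)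
    · exact ih.comp ((continuous_fst.update i continuous_snd))
    · exact continuous_apply i

lemma K_hasDerivAt {G : (Fin n → ℝ) → ℝ} (hG : Continuous G) (i : Fin n) (l : List (Fin n))
    (x : Fin n → ℝ) :
    HasDerivAt (fun t => K (i :: l) G (Function.update x i t)) (K l G x) (x i) := by
  have hψ : Continuous fun s : ℝ => K l G (Function.update x i s) :=
    (K_continuous hG l).comp (continuous_const.update i continuous_id)
  have hfun : (fun t => K (i :: l) G (Function.update x i t))
      = fun t => ∫ s in (0:ℝ)..t, K l G (Function.update x i s) := by
    funext t
    show ∫ s in (0:ℝ)..(Function.update x i t i),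
        K l G (Function.update (Function.update x i t) i s) = _
    simp [Function.update_idem]
  rw [hfun]
  have := intervalIntegral.integral_hasDerivAt_right
    (f := fun s => K l G (Function.update x i s)) (a := 0) (b := x i)
    (hψ.intervalIntegrable 0 (x i))
    (hψ.stronglyMeasurable.stronglyMeasurableAtFilter)
    hψ.continuousAt
  simpa [Function.update_eq_self] using this

lemma mixedD_K {G : (Fin n → ℝ) → ℝ} (hG : Continuous G) (l₂ : List (Fin n)) :
    ∀ l₁, mixedD l₂ (K (l₂.reverse ++ l₁) G) = K l₁ G := by
  induction l₂ with
  | nil => intro l₁; rfl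
  | cons i l₂ ih =>
    intro l₁
    have hrev : (i :: l₂).reverse ++ l₁ = l₂.reverse ++ (i :: l₁) := by
      simp [List.reverse_cons, List.append_assoc]
    show pd i (mixedD l₂ (K ((i :: l₂).reverse ++ l₁) G)) = K l₁ G
    rw [hrev, ih (i :: l₁)]
    funext x
    exact (K_hasDerivAt hG i l₁ x).deriv

lemma MixedDiffOn_K {G : (Fin n → ℝ) → ℝ} (hG : Continuous G) (l₂ : List (Fin n)) :
    ∀ l₁ (U : Set (Fin n → ℝ)), MixedDiffOn l₂ (K (l₂.reverse ++ l₁) G) U := by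
  induction l₂ with
  | nil => intro l₁ U; trivial
  | cons i l₂ ih =>
    intro l₁ U
    have hrev : (i :: l₂).reverse ++ l₁ = l₂.reverse ++ (i :: l₁) := by
      simp [List.reverse_cons, List.append_assoc]
    refine ⟨by rw [hrev]; exact ih (i :: l₁) U, fun x _ => ?_⟩
    unfold PdAt
    rw [hrev, mixedD_K hG l₂ (i :: l₁)]
    exact (K_hasDerivAt hG i l₁ x).differentiableAt

lemma K_zero {G : (Fin n → ℝ) → ℝ} {l : List (Fin n)} {j : Fin n} (hj : j ∈ l)
    {x : Fin n → ℝ} (hx : x j = 0) : K l G x = 0 := by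
  induction l generalizing x with
  | nil => exact absurd hj List.not_mem_nil
  | cons i l ih =>
    rcases eq_or_ne j i with rfl | hij
    · show ∫ t in (0:ℝ)..(x j), K l G (Function.update x j t) = 0
      rw [hx, intervalIntegral.integral_same]
    · have hj' : j ∈ l := by
        rcases List.mem_cons.1 hj with h | h
        · exact absurd h hij
        · exact h
      show ∫ t in (0:ℝ)..(x i), K l G (Function.update x i t) = 0
      have : (fun t => K l G (Function.update x i t)) = fun _ => (0:ℝ) := by
        funext t
        exact ih hj' (by rw [Function.update_of_ne hij]; exact hx)
      rw [this, intervalIntegral.integral_zero]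

lemma K_congr {G G' : (Fin n → ℝ) → ℝ} (h : Set.EqOn G G' (Set.Icc 0 1))
    (l : List (Fin n)) : ∀ x ∈ Set.Icc (0 : Fin n → ℝ) 1, K l G x = K l G' x := by
  induction l with
  | nil => exact fun x hx => h hx
  | cons i l ih =>
    intro x hx
    show (∫ t in (0:ℝ)..(x i), K l G (Function.update x i t))
        = ∫ t in (0:ℝ)..(x i), K l G' (Function.update x i t)
    apply intervalIntegral.integral_congr
    intro t ht
    have hxi : x i ∈ Set.Icc (0:ℝ) 1 := ⟨hx.1 i, hx.2 i⟩
    have ht' : t ∈ Set.Icc (0:ℝ) 1 := by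
      rw [Set.uIcc_of_le hxi.1] at ht
      exact ⟨ht.1, le_trans ht.2 hxi.2⟩
    refine ih _ ⟨fun j => ?_, fun j => ?_⟩ <;> rcases eq_or_ne j i with rfl | hij
    · simpa using ht'.1
    · simpa [Function.update_of_ne hij] using hx.1 j
    · simpa using ht'.2
    · simpa [Function.update_of_ne hij] using hx.2 j

lemma K_add {P Q : (Fin n → ℝ) → ℝ} (hP : Continuous P) (hQ : Continuous Q)
    (l : List (Fin n)) (x : Fin n → ℝ) :
    K l (fun y => P y + Q y) x = K l P x + K l Q x := by
  induction l generalizing x with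
  | nil => rfl
  | cons i l ih =>
    show (∫ t in (0:ℝ)..(x i), K l (fun y => P y + Q y) (Function.update x i t)) = _
    have : (fun t => K l (fun y => P y + Q y) (Function.update x i t))
        = fun t => K l P (Function.update x i t) + K l Q (Function.update x i t) := by
      funext t; exact ih _
    rw [this]
    have hiP : Continuous fun t : ℝ => K l P (Function.update x i t) :=
      (K_continuous hP l).comp (continuous_const.update i continuous_id)
    have hiQ : Continuous fun t : ℝ => K l Q (Function.update x i t) :=
      (K_continuous hQ l).comp (continuous_const.update i continuous_id)
    rw [intervalIntegral.integral_add (hiP.intervalIntegrable _ _) (hiQ.intervalIntegrable _ _)]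
    rfl

lemma K_const (c : ℝ) {l : List (Fin n)} (hl : l.Nodup) (x : Fin n → ℝ) :
    K l (fun _ => c) x = c * (l.map x).prod := by
  induction l generalizing x with
  | nil => simp [K]
  | cons i l ih =>
    have hi : i ∉ l := (List.nodup_cons.1 hl).1
    show (∫ t in (0:ℝ)..(x i), K l (fun _ => c) (Function.update x i t)) = _
    have : (fun t => K l (fun _ => c) (Function.update x i t)) =
        fun _ : ℝ => c * (l.map x).prod := by
      funext t
      rw [ih (List.nodup_cons.1 hl).2]
      rw [show List.map (Function.update x i t) l = List.map x l from
        List.map_congr_left fun j hj =>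
          Function.update_of_ne (fun h : j = i => hi (h ▸ hj)) _ _]
    rw [this, intervalIntegral.integral_const, List.map_cons, List.prod_cons]
    simp [smul_eq_mul]
    ring


lemma pi_restrict_Icc :
    (Measure.pi fun _ : Fin n => volume.restrict (Set.Icc (0:ℝ) 1))
      = volume.restrict (Set.Icc (0 : Fin n → ℝ) 1) := by
  refine Measure.pi_eq fun s hs => ?_
  rw [Measure.restrict_apply (MeasurableSet.univ_pi hs)]
  have h1 : Set.Icc (0 : Fin n → ℝ) 1 = Set.pi Set.univ fun _ => Set.Icc (0:ℝ) 1 := by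
    rw [← Set.pi_univ_Icc]; rfl
  rw [h1, ← Set.pi_inter_distrib, volume_pi_pi]
  exact Finset.prod_congr rfl fun i _ => (Measure.restrict_apply (hs i)).symm

lemma K_eq_lmarginal {G : (Fin n → ℝ) → ℝ} {M : ℝ} (hG : Continuous G)
    (hnn : ∀ y, 0 ≤ G y) (hM : ∀ y, G y ≤ M) (l : List (Fin n)) (hl : l.Nodup) :
    ∀ x : Fin n → ℝ, (∀ j ∈ l, x j = 1) →
    K l G x = ((MeasureTheory.lmarginal (fun _ : Fin n => volume.restrict (Set.Icc (0:ℝ) 1))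
      l.toFinset (fun y => ENNReal.ofReal (G y))) x).toReal := by
  induction l with
  | nil =>
    intro x hx
    show G x = _
    rw [List.toFinset_nil, lmarginal_empty, ENNReal.toReal_ofReal (hnn x)]
  | cons i l ih =>
    intro x hx
    have hi : i ∉ l := (List.nodup_cons.1 hl).1
    have hi' : i ∉ l.toFinset := by simpa using hi
    set μ1 : Measure ℝ := volume.restrict (Set.Icc (0:ℝ) 1) with hμ1
    have hfmeas : Measurable fun y : Fin n → ℝ => ENNReal.ofReal (G y) :=
      ENNReal.measurable_ofReal.comp hG.measurable
    set m := MeasureTheory.lmarginal (fun _ : Fin n => μ1) l.toFinset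
      (fun y => ENNReal.ofReal (G y)) with hm
    have hRHS : (MeasureTheory.lmarginal (fun _ : Fin n => μ1) (i :: l).toFinset
        (fun y => ENNReal.ofReal (G y))) x = ∫⁻ t, m (Function.update x i t) ∂μ1 := by
      rw [List.toFinset_cons]
      exact lmarginal_insert _ hfmeas hi' x
    have hxi : x i = 1 := hx i ((List.mem_cons_self (a := i) (l := l)))
    have hKm : ∀ t : ℝ, K l G (Function.update x i t) = (m (Function.update x i t)).toReal := by
      intro t
      apply ih (List.nodup_cons.1 hl).2
      intro j hj
      rw [Function.update_of_ne (fun h : j = i => hi (h ▸ hj))]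
      exact hx j (List.mem_cons_of_mem _ hj)
    have hconst : ∀ y, m y ≤ ENNReal.ofReal M := by
      intro y
      have h1 : m y ≤ (MeasureTheory.lmarginal (fun _ : Fin n => μ1) l.toFinset
          (fun _ => ENNReal.ofReal M)) y :=
        lmarginal_mono (fun z => ENNReal.ofReal_le_ofReal (hM z)) y
      have h2 : (MeasureTheory.lmarginal (fun _ : Fin n => μ1) l.toFinset
          (fun _ => ENNReal.ofReal M)) y = ENNReal.ofReal M := by
        rw [MeasureTheory.lmarginal, lintegral_const]
        have : (Measure.pi fun _ : l.toFinset => μ1) Set.univ = 1 := by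
          rw [Measure.pi_univ]
          simp [hμ1, Real.volume_Icc]
        rw [this, mul_one]
      exact h1.trans_eq h2
    have hfin : ∀ t : ℝ, m (Function.update x i t) < ⊤ :=
      fun t => lt_of_le_of_lt (hconst _) ENNReal.ofReal_lt_top
    have hmeasm : Measurable m := hfmeas.lmarginal _
    show (∫ t in (0:ℝ)..(x i), K l G (Function.update x i t)) = _
    rw [hxi, hRHS]
    calc (∫ t in (0:ℝ)..1, K l G (Function.update x i t))
        = ∫ t in (0:ℝ)..1, (m (Function.update x i t)).toReal := by
          congr 1; funext t; exact hKm t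
      _ = ∫ t in Set.Ioc (0:ℝ) 1, (m (Function.update x i t)).toReal :=
          intervalIntegral.integral_of_le zero_le_one
      _ = ∫ t, (m (Function.update x i t)).toReal ∂μ1 := by
          show ∫ t, _ ∂(volume.restrict (Set.Ioc (0:ℝ) 1)) = _
          rw [hμ1, Measure.restrict_congr_set MeasureTheory.Ioc_ae_eq_Icc]
      _ = (∫⁻ t, m (Function.update x i t) ∂μ1).toReal := by
          apply integral_toReal
          · exact ((hmeasm.comp (measurable_update x)).aemeasurable)
          · exact Filter.Eventually.of_forall hfin

lemma K_eq_integral {G : (Fin n → ℝ) → ℝ} {M : ℝ} (hG : Continuous G)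
    (hnn : ∀ y, 0 ≤ G y) (hM : ∀ y, G y ≤ M) :
    K (List.finRange n).reverse G (fun _ => 1) = ∫ y in Set.Icc (0 : Fin n → ℝ) 1, G y := by
  have hl : ((List.finRange n).reverse).Nodup := by
    rw [List.nodup_reverse]; exact List.nodup_finRange n
  rw [K_eq_lmarginal hG hnn hM _ hl _ (fun j _ => rfl)]
  have ht : ((List.finRange n).reverse).toFinset = Finset.univ := by
    rw [List.toFinset_reverse, List.toFinset_finRange]
  rw [ht, lmarginal_univ, pi_restrict_Icc]
  rw [integral_eq_lintegral_of_nonneg_ae (Filter.Eventually.of_forall hnn)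
    hG.aestronglyMeasurable.restrict]

end Aux

open Aux in
set_option maxHeartbeats 1600000 in
/-- Let `T : ℝ^n → ℝ^n` be an invertible linear map, `I = [0,1]^n` the
unit hypercube and `U = T(I)` the corresponding parallelotope. Let `f` be continuous on `U`,
and let `F` be an antiderivative on `I` of `x ↦ f(T x) · |det T|`: `F` is continuous on `I`
and its mixed partial derivative `∂_1 ⋯ ∂_n F` exists on the open unit cube `(0,1)^n` and
equals `f(T x) · |det T|` there. Then
`∫_U f = ∑_{s ∈ {0,1}^n} (−1)^{#_0(s)} F(s)`, where each binary string `s` is regarded as a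
vertex of the unit cube (so that `T s` runs over the vertices of `U`) and `#_0(s)` is the
number of zeros in `s`. -/
theorem integral_parallelotope_eq_alternating_vertex_sum (n : ℕ)
    (T : (Fin n → ℝ) ≃ₗ[ℝ] (Fin n → ℝ)) (f F : (Fin n → ℝ) → ℝ)
    (hf : ContinuousOn f (⇑T '' Set.Icc (0 : Fin n → ℝ) 1))
    (hF : ContinuousOn F (Set.Icc (0 : Fin n → ℝ) 1))
    (hdiff : MixedDiffOn (List.finRange n) F (Set.pi Set.univ fun _ => Set.Ioo (0 : ℝ) 1))
    (hpde : ∀ x ∈ Set.pi Set.univ fun _ => Set.Ioo (0 : ℝ) 1,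
      mixedD (List.finRange n) F x =
        f (T x) * |LinearMap.det (T : (Fin n → ℝ) →ₗ[ℝ] (Fin n → ℝ))|) :
    ∫ y in ⇑T '' Set.Icc (0 : Fin n → ℝ) 1, f y =
      ∑ s : Fin n → Bool,
        (-1 : ℝ) ^ (Finset.univ.filter fun j => s j = false).card *
          F (fun j => if s j then 1 else 0) := by
  classical
  -- continuity of T
  have hT : Continuous ⇑T :=
    LinearMap.continuous_of_finiteDimensional (T : (Fin n → ℝ) →ₗ[ℝ] (Fin n → ℝ))
  set d : ℝ := |LinearMap.det (T : (Fin n → ℝ) →ₗ[ℝ] (Fin n → ℝ))| with hd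
  -- Tietze extension of f ∘ T
  have hq : ContinuousOn (fun x => f (T x)) (Set.Icc (0 : Fin n → ℝ) 1) :=
    hf.comp hT.continuousOn (fun x hx => Set.mem_image_of_mem _ hx)
  obtain ⟨qe, hqe⟩ := ContinuousMap.exists_restrict_eq (Y := ℝ) isClosed_Icc
    ⟨_, hq.restrict⟩
  have hqe' : ∀ x ∈ Set.Icc (0 : Fin n → ℝ) 1, qe x = f (T x) := by
    intro x hx
    exact ContinuousMap.congr_fun hqe ⟨x, hx⟩
  set gt : (Fin n → ℝ) → ℝ := fun x => qe x * d with hgt_def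
  have hgt : Continuous gt := (map_continuous qe).mul continuous_const
  have hgtIcc : ∀ x ∈ Set.Icc (0 : Fin n → ℝ) 1, gt x = f (T x) * d := by
    intro x hx; rw [hgt_def]; simp only; rw [hqe' x hx]
  -- the iterated primitive H
  set Lrev : List (Fin n) := (List.finRange n).reverse with hLrev
  set H : (Fin n → ℝ) → ℝ := K Lrev gt with hH
  have happ : Lrev ++ ([] : List (Fin n)) = Lrev := List.append_nil _
  have hHc : Continuous H := K_continuous hgt _
  have hHdiffS : MixedDiffOn (List.finRange n) H (S n) := by
    have := MixedDiffOn_K hgt (List.finRange n) [] (S n)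
    rwa [happ] at this
  have hHd : ∀ x, mixedD (List.finRange n) H x = gt x := by
    intro x
    have := mixedD_K hgt (List.finRange n) []
    rw [happ] at this
    rw [hH, this]
    rfl
  -- the function D with vanishing mixed derivative
  have hdiffS : MixedDiffOn (List.finRange n) F (S n) := hdiff
  have hsub := mixedD_sub (n := n) isOpen_S (List.finRange n) F H hdiffS hHdiffS
  have hD0 : ∀ x ∈ S n, mixedD (List.finRange n) (fun y => F y - H y) x = 0 := by
    intro x hx
    rw [hsub.2 x hx, hHd, hpde x hx, hgtIcc x (S_subset_Icc hx)]
    ring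
  -- the mean value argument at scale ε k
  set ε : ℕ → ℝ := fun k => 1 / (k + 2) with hε
  have hεpos : ∀ k, 0 < ε k := by
    intro k; rw [hε]; positivity
  have hεhalf : ∀ k : ℕ, ε k ≤ 1 / 2 := by
    intro k
    rw [hε]
    apply one_div_le_one_div_of_le
    · norm_num
    · have : (0:ℝ) ≤ (k:ℝ) := Nat.cast_nonneg k
      linarith
  have hε1 : ∀ k, ε k < 1 := fun k => lt_of_le_of_lt (hεhalf k) (by norm_num)
  have key : ∀ k : ℕ, ∑ σ ∈ (Finset.univ : Finset (Fin n)).powerset,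
      (-1 : ℝ) ^ (n - σ.card) *
        ((fun y => F y - H y) (fun j => if j ∈ σ then 1 - ε k else ε k)) = 0 := by
    intro k
    have ha : ∀ j : Fin n, 0 < (fun _ : Fin n => ε k) j := fun _ => hεpos k
    have hb : ∀ j : Fin n, (fun _ : Fin n => 1 - ε k) j < 1 := by
      intro j; simp only; linarith [hεpos k]
    have hab : ∀ j : Fin n, (fun _ : Fin n => ε k) j ≤ (fun _ : Fin n => 1 - ε k) j := by
      intro j; simp only; linarith [hεhalf k]
    have hhalf : (fun _ : Fin n => (1:ℝ)/2) ∈ S n := by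
      intro j _
      constructor <;> norm_num
    obtain ⟨ξ, hξ, hval⟩ := mvt ha hb hab (List.finRange n) (List.nodup_finRange n)
      (fun y => F y - H y) hsub.1 (fun _ => 1/2) hhalf
    rw [hD0 ξ hξ, mul_zero] at hval
    have hexp := Dif_eq_sum (fun _ : Fin n => ε k) (fun _ : Fin n => 1 - ε k)
      (List.finRange n) (List.nodup_finRange n) (fun y => F y - H y) (fun _ => 1/2)
    rw [hval] at hexp
    simp only [List.toFinset_finRange, List.length_finRange, Finset.mem_univ,
      if_true] at hexp
    exact hexp.symm
  -- pass to the limit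
  have hεlim : Filter.Tendsto ε Filter.atTop (nhds 0) := by
    have h2 : Filter.Tendsto (fun k : ℕ => (k:ℝ) + 2) Filter.atTop Filter.atTop :=
      Filter.tendsto_atTop_add_const_right _ 2 tendsto_natCast_atTop_atTop
    simpa [hε, one_div, Pi.inv_def] using h2.inv_tendsto_atTop
  have hDcont : ContinuousOn (fun y => F y - H y) (Set.Icc (0 : Fin n → ℝ) 1) :=
    hF.sub hHc.continuousOn
  have hlim : ∑ σ ∈ (Finset.univ : Finset (Fin n)).powerset, (-1 : ℝ) ^ (n - σ.card) *
      ((fun y => F y - H y) (fun j => if j ∈ σ then (1:ℝ) else 0)) = 0 := by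
    have hptmem : ∀ σ : Finset (Fin n),
        (fun j => if j ∈ σ then (1:ℝ) else 0) ∈ Set.Icc (0 : Fin n → ℝ) 1 := by
      intro σ
      refine ⟨fun j => ?_, fun j => ?_⟩ <;> by_cases hj : j ∈ σ <;> simp [hj]
    have hptkmem : ∀ k (σ : Finset (Fin n)),
        (fun j => if j ∈ σ then 1 - ε k else ε k) ∈ Set.Icc (0 : Fin n → ℝ) 1 := by
      intro k σ
      have h1 := hεpos k
      have h2 := hε1 k
      refine ⟨fun j => ?_, fun j => ?_⟩ <;> by_cases hj : j ∈ σ <;>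
        simp [hj] <;> linarith
    have htend : Filter.Tendsto
        (fun k : ℕ => ∑ σ ∈ (Finset.univ : Finset (Fin n)).powerset, (-1 : ℝ) ^ (n - σ.card) *
          ((fun y => F y - H y) (fun j => if j ∈ σ then 1 - ε k else ε k)))
        Filter.atTop
        (nhds (∑ σ ∈ (Finset.univ : Finset (Fin n)).powerset, (-1 : ℝ) ^ (n - σ.card) *
          ((fun y => F y - H y) (fun j => if j ∈ σ then (1:ℝ) else 0)))) := by
      apply tendsto_finset_sum
      intro σ _
      apply Filter.Tendsto.const_mul
      have h1 : Filter.Tendsto (fun k => (fun j => if j ∈ σ then 1 - ε k else ε k))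
          Filter.atTop (nhds (fun j => if j ∈ σ then (1:ℝ) else 0)) := by
        rw [tendsto_pi_nhds]
        intro j
        by_cases hj : j ∈ σ
        · simp only [hj, if_true]
          have := Filter.Tendsto.const_sub (1:ℝ) hεlim
          simpa using this
        · simpa only [hj, if_false] using hεlim
      have h2 : Filter.Tendsto (fun k => (fun j => if j ∈ σ then 1 - ε k else ε k))
          Filter.atTop (nhdsWithin (fun j => if j ∈ σ then (1:ℝ) else 0)
            (Set.Icc (0 : Fin n → ℝ) 1)) :=
        tendsto_nhdsWithin_of_tendsto_nhds_of_eventually_within _ h1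
          (Filter.Eventually.of_forall fun k => hptkmem k σ)
      exact (hDcont _ (hptmem σ)).tendsto.comp h2
    exact tendsto_nhds_unique (Filter.Tendsto.congr key htend) tendsto_const_nhds
  -- split into F-sum and H-sum
  have hsplit : ∑ σ ∈ (Finset.univ : Finset (Fin n)).powerset, (-1 : ℝ) ^ (n - σ.card) *
        F (fun j => if j ∈ σ then (1:ℝ) else 0)
      = ∑ σ ∈ (Finset.univ : Finset (Fin n)).powerset, (-1 : ℝ) ^ (n - σ.card) *
        H (fun j => if j ∈ σ then (1:ℝ) else 0) := by
    have := hlim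
    simp only [mul_sub] at this
    rw [Finset.sum_sub_distrib] at this
    linarith [this]
  -- the H-sum collapses to the single vertex (1,…,1)
  have hHsum : ∑ σ ∈ (Finset.univ : Finset (Fin n)).powerset, (-1 : ℝ) ^ (n - σ.card) *
      H (fun j => if j ∈ σ then (1:ℝ) else 0) = H (fun _ => 1) := by
    rw [Finset.powerset_univ]
    rw [Finset.sum_eq_single_of_mem (Finset.univ : Finset (Fin n)) (Finset.mem_univ _)]
    · rw [Finset.card_univ, Fintype.card_fin, Nat.sub_self, pow_zero, one_mul]
      congr 1
      funext j
      simp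
    · intro σ _ hσ
      obtain ⟨j, hj⟩ : ∃ j, j ∉ σ := by
        by_contra h
        push_neg at h
        exact hσ (Finset.eq_univ_iff_forall.2 h)
      have hzero : H (fun j' => if j' ∈ σ then (1:ℝ) else 0) = 0 := by
        apply K_zero (l := Lrev) (j := j)
        · rw [hLrev, List.mem_reverse]
          exact List.mem_finRange j
        · simp [hj]
      rw [hzero, mul_zero]
  -- the value H(1,…,1) equals the integral of gt over the cube
  obtain ⟨C, hC⟩ := IsCompact.exists_bound_of_continuousOn isCompact_Icc
    (hgt.continuousOn (s := Set.Icc (0 : Fin n → ℝ) 1))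
  set M : ℝ := max C 0 with hM
  have hboundIcc : ∀ x ∈ Set.Icc (0 : Fin n → ℝ) 1, |gt x| ≤ M := by
    intro x hx
    exact le_trans (hC x hx) (le_max_left _ _)
  set g1 : (Fin n → ℝ) → ℝ := fun x => max (min (gt x) M) (-M) with hg1
  have hg1c : Continuous g1 := ((hgt.min continuous_const).max continuous_const)
  have hg1eq : Set.EqOn gt g1 (Set.Icc (0 : Fin n → ℝ) 1) := by
    intro x hx
    have := hboundIcc x hx
    rw [abs_le] at this
    rw [hg1]
    simp only
    rw [min_eq_left this.2, max_eq_left this.1]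
  have hg1lb : ∀ y, -M ≤ g1 y := fun y => le_max_right _ _
  have hg1ub : ∀ y, g1 y ≤ M := by
    intro y
    rw [hg1]
    simp only
    apply max_le (le_trans (min_le_right _ _) le_rfl)
    rw [hM]
    have : (0:ℝ) ≤ max C 0 := le_max_right _ _
    linarith
  set gP : (Fin n → ℝ) → ℝ := fun x => g1 x + M with hgP
  have hgPc : Continuous gP := hg1c.add continuous_const
  have hgPnn : ∀ y, 0 ≤ gP y := by
    intro y; rw [hgP]; simp only; linarith [hg1lb y]
  have hgPub : ∀ y, gP y ≤ M + M := by
    intro y; rw [hgP]; simp only; linarith [hg1ub y]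
  have hLrevNodup : Lrev.Nodup := by
    rw [hLrev, List.nodup_reverse]; exact List.nodup_finRange n
  have hone : (fun _ : Fin n => (1:ℝ)) ∈ Set.Icc (0 : Fin n → ℝ) 1 :=
    ⟨fun j => by norm_num, fun j => by norm_num⟩
  have hmap1 : ((Lrev).map (fun _ : Fin n => (1:ℝ))).prod = 1 := by
    apply List.prod_eq_one
    intro a ha
    rcases List.mem_map.1 ha with ⟨j, _, rfl⟩
    rfl
  have hHval : H (fun _ => 1) = ∫ y in Set.Icc (0 : Fin n → ℝ) 1, gt y := by
    have h1 : H (fun _ => 1) = K Lrev g1 (fun _ => 1) := by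
      rw [hH]
      exact K_congr hg1eq Lrev _ hone
    have h2 : ∀ x, g1 x = gP x + (-M) := by
      intro x; rw [hgP]; simp only; ring
    have h3 : K Lrev g1 (fun _ => 1) = K Lrev gP (fun _ => 1) + K Lrev (fun _ => -M) (fun _ => 1) := by
      rw [show g1 = fun x => gP x + (-M) from funext h2]
      exact K_add hgPc continuous_const Lrev _
    have h4 : K Lrev (fun _ : Fin n → ℝ => -M) (fun _ : Fin n => (1:ℝ)) = -M := by
      rw [K_const (-M) hLrevNodup, hmap1, mul_one]
    have h5 : K Lrev gP (fun _ => 1) = ∫ y in Set.Icc (0 : Fin n → ℝ) 1, gP y := by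
      rw [hLrev]
      exact K_eq_integral hgPc hgPnn hgPub
    have hIgt : IntegrableOn gt (Set.Icc (0 : Fin n → ℝ) 1) volume :=
      hgt.continuousOn.integrableOn_compact isCompact_Icc
    have hIc : IntegrableOn (fun _ : Fin n → ℝ => M) (Set.Icc (0 : Fin n → ℝ) 1) volume :=
      integrableOn_const ((by
        rw [← Set.pi_univ_Icc, volume_pi_pi]
        simp [Real.volume_Icc]))
    have hvol1 : (volume (Set.Icc (0 : Fin n → ℝ) 1)).toReal = 1 := by
      have : Set.Icc (0 : Fin n → ℝ) 1 = Set.pi Set.univ fun _ => Set.Icc (0:ℝ) 1 := by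
        rw [← Set.pi_univ_Icc]; rfl
      rw [this, volume_pi_pi]
      simp [Real.volume_Icc]
    have h6 : ∫ y in Set.Icc (0 : Fin n → ℝ) 1, gP y
        = (∫ y in Set.Icc (0 : Fin n → ℝ) 1, gt y) + M := by
      have hgPeq : Set.EqOn gP (fun y => gt y + M) (Set.Icc (0 : Fin n → ℝ) 1) := by
        intro x hx
        rw [hgP]
        simp only
        rw [← hg1eq hx]
      rw [setIntegral_congr_fun measurableSet_Icc hgPeq]
      rw [integral_add hIgt hIc]
      congr 1
      rw [setIntegral_const, measureReal_def, hvol1, one_smul]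
    rw [h1, h3, h4, h5, h6]
    ring
  -- change of variables on the left-hand side
  set L : (Fin n → ℝ) →L[ℝ] (Fin n → ℝ) :=
    LinearMap.toContinuousLinearMap (T : (Fin n → ℝ) →ₗ[ℝ] (Fin n → ℝ)) with hL
  have hLcoe : ⇑L = ⇑T := LinearMap.coe_toContinuousLinearMap' _
  have hder : ∀ x ∈ Set.Icc (0 : Fin n → ℝ) 1,
      HasFDerivWithinAt ⇑T L (Set.Icc (0 : Fin n → ℝ) 1) x := by
    intro x _
    have := L.hasFDerivAt (x := x)
    rw [hLcoe] at this
    exact this.hasFDerivWithinAt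
  have hinj : Set.InjOn ⇑T (Set.Icc (0 : Fin n → ℝ) 1) := T.injective.injOn
  have hcov := integral_image_eq_integral_abs_det_fderiv_smul volume measurableSet_Icc
    hder hinj f
  have hLdet : L.det = LinearMap.det (T : (Fin n → ℝ) →ₗ[ℝ] (Fin n → ℝ)) := by
    rw [hL]
    rfl
  have hLHS : ∫ y in ⇑T '' Set.Icc (0 : Fin n → ℝ) 1, f y
      = ∫ y in Set.Icc (0 : Fin n → ℝ) 1, gt y := by
    rw [hcov]
    apply setIntegral_congr_fun measurableSet_Icc
    intro x hx
    simp only [hLdet, smul_eq_mul]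
    rw [hgtIcc x hx]
    ring
  -- convert the powerset sum to a sum over boolean strings
  have hconv : ∑ s : Fin n → Bool,
      (-1 : ℝ) ^ (Finset.univ.filter fun j => s j = false).card *
        F (fun j => if s j then 1 else 0)
      = ∑ σ ∈ (Finset.univ : Finset (Fin n)).powerset, (-1 : ℝ) ^ (n - σ.card) *
        F (fun j => if j ∈ σ then (1:ℝ) else 0) := by
    rw [Finset.powerset_univ]
    apply Fintype.sum_bijective (fun s : Fin n → Bool => Finset.univ.filter fun j => s j)
    · constructor
      · intro s t hst
        funext j
        have := Finset.ext_iff.1 hst j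
        simpa using this
      · intro σ
        refine ⟨fun j => j ∈ σ, ?_⟩
        ext j
        simp
    · intro s
      have hcards := Finset.card_filter_add_card_filter_not
        (s := (Finset.univ : Finset (Fin n))) (p := fun j => s j = true)
      simp only [Bool.not_eq_true, Finset.card_univ, Fintype.card_fin] at hcards
      have hpow : n - (Finset.univ.filter fun j => s j = true).card
          = (Finset.univ.filter fun j => s j = false).card := by omega
      have hpt : (fun j => if j ∈ Finset.univ.filter (fun j => s j = true) then (1:ℝ) else 0)
          = fun j => if s j then (1:ℝ) else 0 := by
        funext j; by_cases hj : s j <;> simp [hj]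
      show _ = (-1 : ℝ) ^ (n - (Finset.univ.filter fun j => s j = true).card) * _
      rw [hpow, hpt]
  rw [hLHS, hconv, hsplit, hHsum, hHval]
end

section
/- Let P, Q, R ∈ ℝ² be affinely independent points, let S = Q + R − P, and let Π be the parallelogram with vertices P, Q, S, R (the convex hull of {P, Q, S, R}). Let f be continuous on Π and suppose f is symmetric under the point reflection through the midpoint of the segment QR, i.e. f(Q + R − z) = f(z) for all z ∈ Π. Let φ : [0,1]² → Π be the affine map with φ(0,0) = P, φ(1,0) = Q, φ(0,1) = R, φ(1,1) = S, and let F : [0,1]² → ℝ be an antiderivative on [0,1]² of the function x ↦ f(φ(x)) · |det Dφ|, i.e. F is continuous and ∂_x ∂_y F exists on (0,1)² and equals f(φ(x,y)) · |det Dφ| there. Then the integral of f over the triangle with vertices P, Q, R satisfies ∫_{PQR} f(x,y) dx dy = ½ ( F(1,1) − F(1,0) + F(0,0) − F(0,1) ). -/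
open MeasureTheory

namespace Statement12Aux

open Set

noncomputable def Lmap (a b : ℝ × ℝ) : (ℝ×ℝ) →L[ℝ] (ℝ×ℝ) :=
  (ContinuousLinearMap.fst ℝ ℝ ℝ).smulRight a + (ContinuousLinearMap.snd ℝ ℝ ℝ).smulRight b

lemma Lmap_apply (a b v : ℝ × ℝ) : Lmap a b v = v.1 • a + v.2 • b := rfl

lemma Lmap_det (a b : ℝ × ℝ) : (Lmap a b : (ℝ×ℝ) →ₗ[ℝ] (ℝ×ℝ)).det = a.1 * b.2 - a.2 * b.1 := by
  rw [← LinearMap.det_toMatrix (Module.Basis.finTwoProd ℝ), Matrix.det_fin_two]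
  simp [LinearMap.toMatrix_apply, Module.Basis.coe_finTwoProd_repr, Lmap, Module.Basis.finTwoProd_zero,
    Module.Basis.finTwoProd_one]
  ring

noncomputable def psiA (P Q R : ℝ×ℝ) : (ℝ×ℝ) →ᵃ[ℝ] (ℝ×ℝ) where
  toFun := fun p => P + Lmap (Q-P) (R-P) p
  linear := (Lmap (Q-P) (R-P) : (ℝ×ℝ) →ₗ[ℝ] (ℝ×ℝ))
  map_vadd' := by
    intro p v
    show P + Lmap (Q-P) (R-P) (v + p) = Lmap (Q-P) (R-P) v + (P + Lmap (Q-P) (R-P) p)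
    rw [map_add]; abel

lemma psiA_apply (P Q R : ℝ×ℝ) (p : ℝ×ℝ) :
    psiA P Q R p = P + p.1 • (Q - P) + p.2 • (R - P) := by
  show P + (p.1 • (Q-P) + p.2 • (R-P)) = _
  rw [add_assoc]

lemma psiA_cont (P Q R : ℝ×ℝ) : Continuous (psiA P Q R) := by
  show Continuous fun p => P + Lmap (Q-P) (R-P) p
  exact continuous_const.add (Lmap (Q-P) (R-P)).continuous

lemma sig_comp_psi (P Q R : ℝ×ℝ) (p : ℝ×ℝ) :
    (Q + R) - psiA P Q R p = psiA P Q R (((1:ℝ),(1:ℝ)) - p) := by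
  rw [psiA_apply, psiA_apply]
  show _ = P + (1 - p.1) • (Q - P) + (1 - p.2) • (R - P)
  simp only [sub_smul, one_smul]
  abel

lemma psi_c00 (P Q R : ℝ×ℝ) : psiA P Q R (0,0) = P := by simp [psiA_apply]
lemma psi_c10 (P Q R : ℝ×ℝ) : psiA P Q R (1,0) = Q := by simp [psiA_apply]
lemma psi_c01 (P Q R : ℝ×ℝ) : psiA P Q R (0,1) = R := by simp [psiA_apply]
lemma psi_c11 (P Q R : ℝ×ℝ) : psiA P Q R (1,1) = Q + R - P := by
  simp [psiA_apply]; abel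

lemma indep_key {P Q R : ℝ×ℝ} (hind : AffineIndependent ℝ ![P, Q, R]) :
    ∀ s t : ℝ, s • (Q - P) + t • (R - P) = 0 → s = 0 ∧ t = 0 := by
  have hnc : ¬ Collinear ℝ ({P, Q, R} : Set (ℝ×ℝ)) :=
    affineIndependent_iff_not_collinear_set.mp hind
  intro s t h
  by_contra hcon
  apply hnc
  rw [collinear_iff_of_mem (Set.mem_insert P _)]
  rcases eq_or_ne t 0 with rfl | ht
  · have hs : s ≠ 0 := fun hs => hcon ⟨hs, rfl⟩
    have hQP : Q - P = 0 := by
      have h1 : s • (Q - P) = 0 := by simpa using h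
      exact (smul_eq_zero.mp h1).resolve_left hs
    have hQP' : Q = P := by rwa [sub_eq_zero] at hQP
    refine ⟨R - P, ?_⟩
    rintro x (rfl | rfl | rfl)
    · exact ⟨0, by simp⟩
    · exact ⟨0, by simp [hQP']⟩
    · exact ⟨1, by rw [vadd_eq_add, one_smul]; abel⟩
  · have h4 : t • (R - P) = (-s) • (Q - P) := by
      rw [neg_smul, eq_neg_iff_add_eq_zero, add_comm]; exact h
    have h5 : R - P = (-(s/t)) • (Q - P) := by
      calc R - P = t⁻¹ • (t • (R-P)) := by rw [smul_smul, inv_mul_cancel₀ ht, one_smul]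
        _ = t⁻¹ • ((-s) • (Q-P)) := by rw [h4]
        _ = (-(s/t)) • (Q-P) := by rw [smul_smul]; congr 1; field_simp
    refine ⟨Q - P, ?_⟩
    rintro x (rfl | rfl | rfl)
    · exact ⟨0, by simp⟩
    · exact ⟨1, by rw [vadd_eq_add, one_smul]; abel⟩
    · exact ⟨-(s/t), by rw [vadd_eq_add, ← h5]; abel⟩

lemma P_not_mem_spanQR {P Q R : ℝ×ℝ} (hind : AffineIndependent ℝ ![P, Q, R]) :
    P ∉ affineSpan ℝ ({Q, R} : Set (ℝ×ℝ)) := by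
  intro hmem
  have hnc : ¬ Collinear ℝ ({P, Q, R} : Set (ℝ×ℝ)) :=
    affineIndependent_iff_not_collinear_set.mp hind
  exact hnc (collinear_insert_of_mem_affineSpan_pair hmem)

def T0 : Set (ℝ×ℝ) := {p | 0 ≤ p.1 ∧ 0 ≤ p.2 ∧ p.1 + p.2 ≤ 1}
def T1 : Set (ℝ×ℝ) := {p | p.1 ≤ 1 ∧ p.2 ≤ 1 ∧ 1 ≤ p.1 + p.2}

lemma convex_T0 : Convex ℝ T0 := by
  intro x hx y hy s t hs ht hst
  obtain ⟨h1,h2,h3⟩ := hx; obtain ⟨h4,h5,h6⟩ := hy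
  refine ⟨?_, ?_, ?_⟩ <;>
    simp [Prod.fst_add, Prod.snd_add, Prod.smul_fst, Prod.smul_snd] <;> nlinarith

lemma T0_hull : convexHull ℝ ({((0:ℝ),(0:ℝ)), (1,0), (0,1)} : Set (ℝ×ℝ)) = T0 := by
  apply le_antisymm
  · apply convexHull_min _ convex_T0
    rintro p (rfl | rfl | rfl) <;> constructor <;> norm_num [T0]
  · rintro ⟨x, y⟩ ⟨hx, hy, hxy⟩
    have hmem := (convex_convexHull ℝ ({((0:ℝ),(0:ℝ)), (1,0), (0,1)} : Set (ℝ×ℝ))).sum_mem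
      (t := (Finset.univ : Finset (Fin 3))) (w := ![1-x-y, x, y])
      (z := ![((0:ℝ),(0:ℝ)), (1,0), (0,1)])
      (by intro i _; fin_cases i <;> simp <;> linarith)
      (by simp [Fin.sum_univ_three]; ring)
      (by intro i _; fin_cases i <;> exact subset_convexHull _ _ (by simp))
    convert hmem using 1
    simp [Fin.sum_univ_three, Prod.ext_iff]

lemma sq_hull : convexHull ℝ ({((0:ℝ),(0:ℝ)), (1,0), (1,1), (0,1)} : Set (ℝ×ℝ))
    = Icc (0:ℝ) 1 ×ˢ Icc (0:ℝ) 1 := by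
  apply le_antisymm
  · apply convexHull_min _ ((convex_Icc _ _).prod (convex_Icc _ _))
    rintro p (rfl | rfl | rfl | rfl) <;> constructor <;> norm_num
  · rintro ⟨x, y⟩ ⟨hx, hy⟩
    rw [mem_Icc] at hx hy
    have hmem := (convex_convexHull ℝ
        ({((0:ℝ),(0:ℝ)), (1,0), (1,1), (0,1)} : Set (ℝ×ℝ))).sum_mem
      (t := (Finset.univ : Finset (Fin 4))) (w := ![(1-x)*(1-y), x*(1-y), x*y, (1-x)*y])
      (z := ![((0:ℝ),(0:ℝ)), (1,0), (1,1), (0,1)])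
      (by intro i _; fin_cases i <;> simp <;> nlinarith)
      (by simp [Fin.sum_univ_four]; ring)
      (by intro i _; fin_cases i <;> exact subset_convexHull _ _ (by simp))
    convert hmem using 1
    simp [Fin.sum_univ_four, Prod.ext_iff]
    constructor <;> ring

lemma T1_eq_image : (fun p : ℝ×ℝ => ((1:ℝ),(1:ℝ)) - p) '' T0 = T1 := by
  ext p
  constructor
  · rintro ⟨q, ⟨h1, h2, h3⟩, rfl⟩
    refine ⟨?_, ?_, ?_⟩ <;> simp [Prod.fst_sub, Prod.snd_sub] <;> linarith
  · rintro ⟨h1, h2, h3⟩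
    refine ⟨((1:ℝ),(1:ℝ)) - p, ⟨?_, ?_, ?_⟩, by simp⟩ <;>
      simp [Prod.fst_sub, Prod.snd_sub] <;> linarith

lemma sq_union : Icc (0:ℝ) 1 ×ˢ Icc (0:ℝ) 1 = T0 ∪ T1 := by
  ext ⟨x, y⟩
  simp only [mem_prod, mem_Icc, T0, T1, mem_union, mem_setOf_eq]
  constructor
  · rintro ⟨⟨h1,h2⟩,⟨h3,h4⟩⟩
    rcases le_total (x+y) 1 with h | h
    · exact Or.inl ⟨h1, h3, h⟩
    · exact Or.inr ⟨h2, h4, h⟩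
  · rintro (⟨h1,h2,h3⟩ | ⟨h1,h2,h3⟩) <;>
      exact ⟨⟨by linarith, by linarith⟩, by linarith, by linarith⟩

lemma sq_inter : T0 ∩ T1 ⊆ {p : ℝ×ℝ | p.1 + p.2 = 1} := by
  rintro ⟨x,y⟩ ⟨⟨_,_,h1⟩,⟨_,_,h2⟩⟩
  exact le_antisymm h1 h2

lemma rect_integral (g : ℝ×ℝ → ℝ) (hg : Continuous g) (F : ℝ×ℝ → ℝ)
    (hF : ContinuousOn F (Icc (0:ℝ) 1 ×ˢ Icc (0:ℝ) 1))
    (hdy : ∀ p ∈ Ioo (0:ℝ) 1 ×ˢ Ioo (0:ℝ) 1, DifferentiableAt ℝ (fun v : ℝ => F (p.1, v)) p.2)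
    (hdx : ∀ p ∈ Ioo (0:ℝ) 1 ×ˢ Ioo (0:ℝ) 1,
      DifferentiableAt ℝ (fun u : ℝ => pdy F (u, p.2)) p.1)
    (hpde : ∀ p ∈ Ioo (0:ℝ) 1 ×ˢ Ioo (0:ℝ) 1, pdx (pdy F) p = g p) :
    ∫ p in Icc (0:ℝ) 1 ×ˢ Icc (0:ℝ) 1, g p = F (1,1) - F (0,1) - F (1,0) + F (0,0) := by
  -- Step A: inner FTC
  have stepA : ∀ y ∈ Ioo (0:ℝ) 1, ∀ a ∈ Ioo (0:ℝ) 1, ∀ b ∈ Ioo (0:ℝ) 1,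
      ∫ x in a..b, g (x, y) = pdy F (b, y) - pdy F (a, y) := by
    intro y hy a ha b hb
    apply intervalIntegral.integral_eq_sub_of_hasDerivAt
    · intro x hx
      have hx01 : x ∈ Ioo (0:ℝ) 1 := by
        rw [Set.mem_uIcc] at hx
        rcases hx with ⟨h1, h2⟩ | ⟨h1, h2⟩ <;>
          exact ⟨by rcases ha with ⟨u,v⟩; rcases hb with ⟨u2,v2⟩; linarith,
                by rcases ha with ⟨u,v⟩; rcases hb with ⟨u2,v2⟩; linarith⟩
      have hmem : ((x, y) : ℝ×ℝ) ∈ Ioo (0:ℝ) 1 ×ˢ Ioo (0:ℝ) 1 := ⟨hx01, hy⟩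
      have hd := (hdx (x, y) hmem).hasDerivAt
      have : deriv (fun u : ℝ => pdy F (u, y)) x = g (x, y) := hpde (x, y) hmem
      rwa [this] at hd
    · exact (hg.comp (continuous_id.prodMk continuous_const)).intervalIntegrable a b
  -- Step B: outer FTC
  have stepB : ∀ a ∈ Ioo (0:ℝ) 1, ∀ b ∈ Ioo (0:ℝ) 1,
      ∫ y in (0:ℝ)..1, (∫ x in a..b, g (x, y)) = F (b,1) - F (a,1) - (F (b,0) - F (a,0)) := by
    intro a ha b hb
    have hIcont : Continuous fun y : ℝ => ∫ x in a..b, g (x, y) := by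
      apply intervalIntegral.continuous_parametric_intervalIntegral_of_continuous'
      exact hg.comp (continuous_swap)
    have hres := intervalIntegral.integral_eq_sub_of_hasDeriv_right_of_le zero_le_one
      (f := fun y => F (b, y) - F (a, y)) (f' := fun y => ∫ x in a..b, g (x, y))
      ?_ ?_ (hIcont.intervalIntegrable 0 1)
    · rw [hres]
    · -- continuity of k on [0,1]
      have h1 : ContinuousOn (fun y : ℝ => F (b, y)) (Icc 0 1) := by
        apply hF.comp ((continuous_const.prodMk continuous_id).continuousOn)
        intro y hy
        exact ⟨⟨le_of_lt hb.1, le_of_lt hb.2⟩, hy⟩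
      have h2 : ContinuousOn (fun y : ℝ => F (a, y)) (Icc 0 1) := by
        apply hF.comp ((continuous_const.prodMk continuous_id).continuousOn)
        intro y hy
        exact ⟨⟨le_of_lt ha.1, le_of_lt ha.2⟩, hy⟩
      exact h1.sub h2
    · intro y hy
      have hd1 := (hdy (b, y) ⟨hb, hy⟩).hasDerivAt
      have hd2 := (hdy (a, y) ⟨ha, hy⟩).hasDerivAt
      have := (hd1.sub hd2).hasDerivWithinAt (s := Ioi y)
      show HasDerivWithinAt _ (∫ x in a..b, g (x, y)) (Ioi y) y
      rw [stepA y hy a ha b hb]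
      exact this
  -- Fubini
  have hsqcompact : IsCompact (Icc (0:ℝ) 1 ×ˢ Icc (0:ℝ) 1) := isCompact_Icc.prod isCompact_Icc
  have hInt : IntegrableOn g (Icc (0:ℝ) 1 ×ˢ Icc (0:ℝ) 1) volume :=
    hg.continuousOn.integrableOn_compact hsqcompact
  have fub : ∫ p in Icc (0:ℝ) 1 ×ˢ Icc (0:ℝ) 1, g p
      = ∫ y in (0:ℝ)..1, ∫ x in (0:ℝ)..1, g (x, y) := by
    rw [Measure.volume_eq_prod] at hInt ⊢
    rw [setIntegral_prod _ hInt]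
    have hswap : ∫ x in Icc (0:ℝ) 1, ∫ y in Icc (0:ℝ) 1, g (x, y)
        = ∫ y in Icc (0:ℝ) 1, ∫ x in Icc (0:ℝ) 1, g (x, y) := by
      apply integral_integral_swap
      rw [Measure.prod_restrict]
      exact hInt
    rw [hswap]
    rw [intervalIntegral.integral_of_le zero_le_one, ← integral_Icc_eq_integral_Ioc]
    congr 1
    ext y
    rw [intervalIntegral.integral_of_le zero_le_one, ← integral_Icc_eq_integral_Ioc]
  -- bound
  obtain ⟨M, hM⟩ := hsqcompact.exists_bound_of_continuousOn hg.continuousOn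
  have hM0 : 0 ≤ M := le_trans (norm_nonneg _) (hM ((0:ℝ),(0:ℝ)) (by constructor <;> simp))
  -- the approximation sequence
  set ε : ℕ → ℝ := fun n => ((n:ℝ) + 2)⁻¹ with hεdef
  have hεmem : ∀ n, ε n ∈ Ioo (0:ℝ) 1 := by
    intro n
    constructor
    · positivity
    · rw [inv_lt_one_iff₀]; right; push_cast; linarith [Nat.cast_nonneg (α := ℝ) n]
  have hε0 : Filter.Tendsto ε Filter.atTop (nhds 0) := by
    have h2 : Filter.Tendsto (fun n : ℕ => (n:ℝ) + 2) Filter.atTop Filter.atTop :=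
      Filter.tendsto_atTop_add_const_right Filter.atTop (2:ℝ) tendsto_natCast_atTop_atTop
    exact h2.inv_tendsto_atTop
  have hεmem' : ∀ n, 1 - ε n ∈ Ioo (0:ℝ) 1 := by
    intro n; obtain ⟨h1, h2⟩ := hεmem n; constructor <;> linarith
  set Jint := ∫ p in Icc (0:ℝ) 1 ×ˢ Icc (0:ℝ) 1, g p with hJdef
  set A : ℕ → ℝ := fun n => F (1 - ε n, 1) - F (ε n, 1) - (F (1 - ε n, 0) - F (ε n, 0)) with hAdef
  have hgi : ∀ y : ℝ, ∀ u v : ℝ, IntervalIntegrable (fun x => g (x, y)) volume u v :=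
    fun y u v => (hg.comp (continuous_id.prodMk continuous_const)).intervalIntegrable u v
  have key : ∀ n, ‖A n - Jint‖ ≤ 2 * M * ε n := by
    intro n
    obtain ⟨hε1, hε2⟩ := hεmem n
    have hsplit : ∀ y : ℝ, (∫ x in (0:ℝ)..1, g (x, y))
        - (∫ x in (ε n)..(1 - ε n), g (x, y))
        = (∫ x in (0:ℝ)..(ε n), g (x, y)) + ∫ x in (1 - ε n)..(1:ℝ), g (x, y) := by
      intro y
      have h1 := intervalIntegral.integral_add_adjacent_intervals
        (hgi y 0 (ε n)) (hgi y (ε n) (1 - ε n))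
      have h2 := intervalIntegral.integral_add_adjacent_intervals
        (hgi y 0 (1 - ε n)) (hgi y (1 - ε n) 1)
      rw [← h2, ← h1]; ring
    have hbnd : ∀ y ∈ Icc (0:ℝ) 1, ‖(∫ x in (0:ℝ)..1, g (x, y))
        - (∫ x in (ε n)..(1 - ε n), g (x, y))‖ ≤ 2 * M * ε n := by
      intro y hy
      rw [hsplit y]
      have b1 : ‖∫ x in (0:ℝ)..(ε n), g (x, y)‖ ≤ M * ε n := by
        have := intervalIntegral.norm_integral_le_of_norm_le_const
          (C := M) (f := fun x => g (x, y)) (a := 0) (b := ε n) ?_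
        · simpa [abs_of_nonneg (le_of_lt hε1)] using this
        · intro x hx
          rw [uIoc_of_le (le_of_lt hε1)] at hx
          exact hM (x, y) ⟨⟨le_of_lt hx.1, by linarith [hx.2]⟩, hy⟩
      have b2 : ‖∫ x in (1 - ε n)..(1:ℝ), g (x, y)‖ ≤ M * ε n := by
        have := intervalIntegral.norm_integral_le_of_norm_le_const
          (C := M) (f := fun x => g (x, y)) (a := 1 - ε n) (b := 1) ?_
        · have h3 : |1 - (1 - ε n)| = ε n := by rw [abs_of_nonneg] <;> linarith
          rw [h3] at this; exact this
        · intro x hx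
          rw [uIoc_of_le (by linarith)] at hx
          exact hM (x, y) ⟨⟨by linarith [hx.1], hx.2⟩, hy⟩
      calc ‖(∫ x in (0:ℝ)..(ε n), g (x, y)) + ∫ x in (1 - ε n)..(1:ℝ), g (x, y)‖
          ≤ ‖∫ x in (0:ℝ)..(ε n), g (x, y)‖ + ‖∫ x in (1 - ε n)..(1:ℝ), g (x, y)‖ :=
            norm_add_le _ _
        _ ≤ M * ε n + M * ε n := add_le_add b1 b2
        _ = 2 * M * ε n := by ring
    have hAn : A n = ∫ y in (0:ℝ)..1, ∫ x in (ε n)..(1 - ε n), g (x, y) := by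
      rw [hAdef]
      exact (stepB (ε n) (hεmem n) (1 - ε n) (hεmem' n)).symm
    have hJn : Jint = ∫ y in (0:ℝ)..1, ∫ x in (0:ℝ)..1, g (x, y) := fub
    rw [hAn, hJn]
    have hI1 : IntervalIntegrable (fun y => ∫ x in (ε n)..(1 - ε n), g (x, y)) volume 0 1 := by
      apply Continuous.intervalIntegrable
      apply intervalIntegral.continuous_parametric_intervalIntegral_of_continuous'
      exact hg.comp continuous_swap
    have hI2 : IntervalIntegrable (fun y => ∫ x in (0:ℝ)..1, g (x, y)) volume 0 1 := by
      apply Continuous.intervalIntegrable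
      apply intervalIntegral.continuous_parametric_intervalIntegral_of_continuous'
      exact hg.comp continuous_swap
    rw [← intervalIntegral.integral_sub hI1 hI2]
    have := intervalIntegral.norm_integral_le_of_norm_le_const (C := 2 * M * ε n)
      (f := fun y => (∫ x in (ε n)..(1 - ε n), g (x, y)) - ∫ x in (0:ℝ)..1, g (x, y))
      (a := 0) (b := 1) ?_
    · simpa using this
    · intro y hy
      rw [uIoc_of_le zero_le_one] at hy
      have := hbnd y ⟨le_of_lt hy.1, hy.2⟩
      rw [← norm_neg]
      simpa [neg_sub] using this
  -- limits
  have hA1 : Filter.Tendsto A Filter.atTop (nhds Jint) := by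
    have hd : Filter.Tendsto (fun n => A n - Jint) Filter.atTop (nhds 0) := by
      apply squeeze_zero_norm key
      simpa using hε0.const_mul (2 * M)
    have := hd.add_const Jint
    simpa using this
  have hcorner : ∀ (q : ℝ×ℝ) (u : ℕ → ℝ×ℝ), (∀ n, u n ∈ Icc (0:ℝ) 1 ×ˢ Icc (0:ℝ) 1) →
      Filter.Tendsto u Filter.atTop (nhds q) → q ∈ Icc (0:ℝ) 1 ×ˢ Icc (0:ℝ) 1 →
      Filter.Tendsto (fun n => F (u n)) Filter.atTop (nhds (F q)) := by
    intro q u hu hlim hq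
    apply (hF q hq).tendsto.comp
    rw [tendsto_nhdsWithin_iff]
    exact ⟨hlim, Filter.Eventually.of_forall hu⟩
  have hlim1 : Filter.Tendsto (fun n => ((1 - ε n : ℝ), (1:ℝ))) Filter.atTop (nhds (1,1)) := by
    simpa using ((tendsto_const_nhds.sub hε0).prodMk_nhds
      (tendsto_const_nhds : Filter.Tendsto (fun _ : ℕ => (1:ℝ)) Filter.atTop (nhds 1)))
  have hlim2 : Filter.Tendsto (fun n => ((ε n : ℝ), (1:ℝ))) Filter.atTop (nhds (0,1)) := by
    simpa using (hε0.prodMk_nhds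
      (tendsto_const_nhds : Filter.Tendsto (fun _ : ℕ => (1:ℝ)) Filter.atTop (nhds 1)))
  have hlim3 : Filter.Tendsto (fun n => ((1 - ε n : ℝ), (0:ℝ))) Filter.atTop (nhds (1,0)) := by
    simpa using ((tendsto_const_nhds.sub hε0).prodMk_nhds
      (tendsto_const_nhds : Filter.Tendsto (fun _ : ℕ => (0:ℝ)) Filter.atTop (nhds 0)))
  have hlim4 : Filter.Tendsto (fun n => ((ε n : ℝ), (0:ℝ))) Filter.atTop (nhds (0,0)) := by
    simpa using (hε0.prodMk_nhds
      (tendsto_const_nhds : Filter.Tendsto (fun _ : ℕ => (0:ℝ)) Filter.atTop (nhds 0)))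
  have hmemsq : ∀ n : ℕ, ∀ u ∈ ({ε n, 1 - ε n} : Set ℝ), ∀ v ∈ ({(0:ℝ), 1} : Set ℝ),
      ((u, v) : ℝ×ℝ) ∈ Icc (0:ℝ) 1 ×ˢ Icc (0:ℝ) 1 := by
    intro n u hu v hv
    obtain ⟨h1, h2⟩ := hεmem n
    constructor
    · rcases hu with rfl | rfl <;> constructor <;> simp <;> linarith
    · rcases hv with rfl | rfl <;> constructor <;> norm_num
  have hA2 : Filter.Tendsto A Filter.atTop
      (nhds (F (1,1) - F (0,1) - (F (1,0) - F (0,0)))) := by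
    apply Filter.Tendsto.sub
    · apply Filter.Tendsto.sub
      · exact hcorner (1,1) _ (fun n => hmemsq n _ (by simp) _ (by simp)) hlim1
          ⟨by constructor <;> norm_num, by constructor <;> norm_num⟩
      · exact hcorner (0,1) _ (fun n => hmemsq n _ (by simp) _ (by simp)) hlim2
          ⟨by constructor <;> norm_num, by constructor <;> norm_num⟩
    · apply Filter.Tendsto.sub
      · exact hcorner (1,0) _ (fun n => hmemsq n _ (by simp) _ (by simp)) hlim3
          ⟨by constructor <;> norm_num, by constructor <;> norm_num⟩
      · exact hcorner (0,0) _ (fun n => hmemsq n _ (by simp) _ (by simp)) hlim4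
          ⟨by constructor <;> norm_num, by constructor <;> norm_num⟩
  have := tendsto_nhds_unique hA1 hA2
  rw [this]; ring


end Statement12Aux

open Statement12Aux Set in
/-- Let `P, Q, R ∈ ℝ²` be affinely independent, `S = Q + R − P`, and let
`Π` be the parallelogram `conv {P, Q, S, R}`. Let `f` be continuous on `Π` and symmetric
under the point reflection through the midpoint of `QR`, i.e. `f(Q + R − z) = f(z)` on `Π`.
Let `φ : [0,1]² → Π` be the affine map with `φ(0,0) = P`, `φ(1,0) = Q`, `φ(0,1) = R`,
`φ(1,1) = S`, i.e. `φ(x,y) = P + x•(Q−P) + y•(R−P)`, whose linear part has determinant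
`det Dφ = (Q₁−P₁)(R₂−P₂) − (Q₂−P₂)(R₁−P₁)`, and let `F` be an antiderivative on `[0,1]²`
of `x ↦ f(φ(x)) · |det Dφ|`: `F` is continuous and `∂_x ∂_y F` exists on `(0,1)²` and
equals `f(φ(x,y)) · |det Dφ|` there. Then the integral of `f` over the triangle `PQR`
satisfies `∫_{PQR} f = ½ (F(1,1) − F(1,0) + F(0,0) − F(0,1))`. -/
theorem integral_triangle_eq_half_alternating_vertex_sum (P Q R : ℝ × ℝ)
    (hind : AffineIndependent ℝ ![P, Q, R])
    (f F : ℝ × ℝ → ℝ)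
    (hf : ContinuousOn f (convexHull ℝ {P, Q, Q + R - P, R}))
    (hsym : ∀ z ∈ convexHull ℝ ({P, Q, Q + R - P, R} : Set (ℝ × ℝ)), f (Q + R - z) = f z)
    (φ : ℝ × ℝ → ℝ × ℝ)
    (hφdef : ∀ p : ℝ × ℝ, φ p = P + p.1 • (Q - P) + p.2 • (R - P))
    (hF : ContinuousOn F (Set.Icc (0 : ℝ) 1 ×ˢ Set.Icc (0 : ℝ) 1))
    (hdy : ∀ p ∈ Set.Ioo (0 : ℝ) 1 ×ˢ Set.Ioo (0 : ℝ) 1,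
      DifferentiableAt ℝ (fun v : ℝ => F (p.1, v)) p.2)
    (hdx : ∀ p ∈ Set.Ioo (0 : ℝ) 1 ×ˢ Set.Ioo (0 : ℝ) 1,
      DifferentiableAt ℝ (fun u : ℝ => pdy F (u, p.2)) p.1)
    (hpde : ∀ p ∈ Set.Ioo (0 : ℝ) 1 ×ˢ Set.Ioo (0 : ℝ) 1,
      pdx (pdy F) p =
        f (φ p) * |(Q.1 - P.1) * (R.2 - P.2) - (Q.2 - P.2) * (R.1 - P.1)|) :
    ∫ z in convexHull ℝ ({P, Q, R} : Set (ℝ × ℝ)), f z =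
      (F (1, 1) - F (1, 0) + F (0, 0) - F (0, 1)) / 2 := by
  set ψ : (ℝ×ℝ) → (ℝ×ℝ) := ⇑(psiA P Q R) with hψdef
  have hφψ : φ = ψ := by
    funext p; rw [hφdef, hψdef, psiA_apply]
  set D : ℝ := (Q.1 - P.1) * (R.2 - P.2) - (Q.2 - P.2) * (R.1 - P.1) with hDdef
  set L : (ℝ×ℝ) →L[ℝ] (ℝ×ℝ) := Lmap (Q-P) (R-P) with hLdef
  have hLdet : (L : (ℝ×ℝ) →ₗ[ℝ] (ℝ×ℝ)).det = D := by
    rw [hLdef, Lmap_det]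
    simp [hDdef, Prod.fst_sub, Prod.snd_sub]
  set sq : Set (ℝ×ℝ) := Icc (0:ℝ) 1 ×ˢ Icc (0:ℝ) 1 with hsqdef
  set T : Set (ℝ×ℝ) := convexHull ℝ ({P, Q, R} : Set (ℝ×ℝ)) with hTdef
  set Pi : Set (ℝ×ℝ) := convexHull ℝ ({P, Q, Q + R - P, R} : Set (ℝ×ℝ)) with hPidef
  -- ψ is injective
  have hinj : Function.Injective ψ := by
    intro p q h
    have h1 : L p = L q := by
      have := h
      simp only [hψdef] at this
      have h2 : P + L p = P + L q := this
      exact add_left_cancel h2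
    have h3 : L (p - q) = 0 := by rw [map_sub, h1, sub_self]
    have h4 := indep_key hind (p-q).1 (p-q).2 (by rw [← Lmap_apply, ← hLdef]; exact h3)
    have h5 : p - q = 0 := Prod.ext h4.1 h4.2
    exact sub_eq_zero.mp h5
  -- images of the model sets
  have himg1 : T = ψ '' T0 := by
    rw [hTdef, ← T0_hull, hψdef, AffineMap.image_convexHull]
    congr 1
    rw [Set.image_insert_eq, Set.image_insert_eq, Set.image_singleton,
      psi_c00, psi_c10, psi_c01]
  have himg2 : Pi = ψ '' sq := by
    rw [hPidef, hsqdef, ← sq_hull, hψdef, AffineMap.image_convexHull]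
    congr 1
    rw [Set.image_insert_eq, Set.image_insert_eq, Set.image_insert_eq, Set.image_singleton,
      psi_c00, psi_c10, psi_c11, psi_c01]
  have himg3 : (fun z => Q + R - z) '' T = ψ '' T1 := by
    rw [himg1, ← T1_eq_image, Set.image_image, Set.image_image]
    apply Set.image_congr
    intro p _
    exact sig_comp_psi P Q R p
  have hPiunion : Pi = T ∪ (fun z => Q + R - z) '' T := by
    rw [himg2, hsqdef, sq_union, Set.image_union, ← himg1, ← himg3]
  -- measurability and integrability
  have hTcomp : IsCompact T := (Set.toFinite _).isCompact_convexHull ℝ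
  have hTmeas : MeasurableSet T := hTcomp.isClosed.measurableSet
  have hσcont : Continuous (fun z : ℝ×ℝ => Q + R - z) := continuous_const.sub continuous_id
  have hT'comp : IsCompact ((fun z => Q + R - z) '' T) := hTcomp.image hσcont
  have hT'meas : MeasurableSet ((fun z => Q + R - z) '' T) := hT'comp.isClosed.measurableSet
  have hTsub : T ⊆ Pi := by rw [hPiunion]; exact Set.subset_union_left
  have hT'sub : (fun z => Q + R - z) '' T ⊆ Pi := by
    rw [hPiunion]; exact Set.subset_union_right
  have hfT : IntegrableOn f T := (hf.mono hTsub).integrableOn_compact hTcomp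
  have hfT' : IntegrableOn f ((fun z => Q + R - z) '' T) :=
    (hf.mono hT'sub).integrableOn_compact hT'comp
  -- the overlap is null
  have hnull : volume (T ∩ (fun z => Q + R - z) '' T) = 0 := by
    have hsubline : T ∩ (fun z => Q + R - z) '' T
        ⊆ (affineSpan ℝ ({Q, R} : Set (ℝ×ℝ)) : Set (ℝ×ℝ)) := by
      rw [himg3, himg1, ← Set.image_inter hinj]
      rintro _ ⟨p, hp, rfl⟩
      have hp1 : p.1 + p.2 = 1 := sq_inter hp
      have hQ : Q ∈ affineSpan ℝ ({Q, R} : Set (ℝ×ℝ)) := mem_affineSpan _ (by simp)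
      have hR : R ∈ affineSpan ℝ ({Q, R} : Set (ℝ×ℝ)) := mem_affineSpan _ (by simp)
      have hmem := AffineSubspace.smul_vsub_vadd_mem
        (affineSpan ℝ ({Q, R} : Set (ℝ×ℝ))) p.1 hQ hR hR
      have heq : ψ p = p.1 • (Q - R) + R := by
        rw [hψdef, psiA_apply]
        have hp2 : p.2 = 1 - p.1 := by linarith
        rw [hp2]
        simp only [sub_smul, one_smul, smul_sub]
        abel
      rw [heq]
      simpa using hmem
    apply measure_mono_null hsubline
    apply Measure.addHaar_affineSubspace
    intro htop
    apply P_not_mem_spanQR hind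
    rw [htop]
    trivial
  -- split the integral over the parallelogram
  have hsplit : ∫ z in Pi, f z = (∫ z in T, f z) + ∫ z in (fun z => Q + R - z) '' T, f z := by
    rw [hPiunion]
    exact integral_union_ae hnull hT'meas.nullMeasurableSet hfT hfT'
  -- the reflected integral equals the original
  have hrefl : ∫ z in (fun z => Q + R - z) '' T, f z = ∫ z in T, f z := by
    have h1 : MeasurePreserving (fun z : ℝ×ℝ => (Q + R) - z) volume volume :=
      Measure.measurePreserving_sub_left volume (Q + R)
    have h2 : MeasurableEmbedding (fun z : ℝ×ℝ => (Q + R) - z) :=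
      (Homeomorph.subLeft (Q + R)).measurableEmbedding
    rw [h1.setIntegral_image_emb h2 f T]
    exact setIntegral_congr_fun hTmeas (fun z hz => hsym z (hTsub hz))
  have hdouble : ∫ z in Pi, f z = 2 * ∫ z in T, f z := by
    rw [hsplit, hrefl]; ring
  -- change of variables
  have hsqmeas : MeasurableSet sq := (measurableSet_Icc.prod measurableSet_Icc)
  have hcov : ∫ z in Pi, f z = ∫ p in sq, |D| • f (ψ p) := by
    rw [himg2]
    have h1 := integral_image_eq_integral_abs_det_fderiv_smul volume hsqmeas
      (f' := fun _ => L) (fun p _ => ((L.hasFDerivAt.const_add P).hasFDerivWithinAt)) 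
      (hinj.injOn) f
    rw [← hLdet]
    exact h1
  -- the clamped integrand
  set cl : ℝ → ℝ := fun t => max 0 (min t 1) with hcldef
  have hclcont : Continuous cl := continuous_const.max (continuous_id.min continuous_const)
  have hclmem : ∀ t : ℝ, cl t ∈ Icc (0:ℝ) 1 := by
    intro t
    constructor
    · exact le_max_left _ _
    · apply max_le (by norm_num) (min_le_right _ _)
  have hclid : ∀ t ∈ Icc (0:ℝ) 1, cl t = t := by
    rintro t ⟨h1, h2⟩
    rw [hcldef]
    simp only
    rw [min_eq_left h2, max_eq_right h1]
  set G : (ℝ×ℝ) → ℝ := fun p => f (ψ (cl p.1, cl p.2)) * |D| with hGdef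
  have hψsq : ContinuousOn (fun p => f (ψ p)) sq := by
    apply hf.comp (psiA_cont P Q R).continuousOn
    intro p hp
    rw [hPidef] at himg2 ⊢
    rw [himg2]
    exact Set.mem_image_of_mem _ hp
  have hGcont : Continuous G := by
    apply Continuous.mul _ continuous_const
    apply hψsq.comp_continuous
      ((hclcont.comp continuous_fst).prodMk (hclcont.comp continuous_snd))
    intro p
    exact ⟨hclmem p.1, hclmem p.2⟩
  have hGeq : ∀ p ∈ sq, G p = |D| • f (ψ p) := by
    rintro p ⟨hp1, hp2⟩
    rw [hGdef]
    simp only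
    rw [hclid p.1 hp1, hclid p.2 hp2, smul_eq_mul, mul_comm]
  have hGpde : ∀ p ∈ Ioo (0:ℝ) 1 ×ˢ Ioo (0:ℝ) 1, pdx (pdy F) p = G p := by
    rintro p ⟨hp1, hp2⟩
    rw [hpde p ⟨hp1, hp2⟩, hGdef]
    simp only
    rw [hclid p.1 (Ioo_subset_Icc_self hp1), hclid p.2 (Ioo_subset_Icc_self hp2), hφψ]
  have hrect := rect_integral G hGcont F hF hdy hdx hGpde
  have hGint : ∫ p in sq, |D| • f (ψ p) = F (1,1) - F (0,1) - F (1,0) + F (0,0) := by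
    rw [← hrect]
    exact (setIntegral_congr_fun hsqmeas hGeq).symm
  have hfinal : ∫ z in Pi, f z = F (1,1) - F (0,1) - F (1,0) + F (0,0) := by
    rw [hcov, hGint]
  rw [hdouble] at hfinal
  linarith
end
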